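/- arXiv:2104.08669 — 4 statements merged into one kernel-verified Lean document; each statement's English description precedes it below -/
import Mathlib

section
/- (Symplectic structured SVD, real case) Every real symplectic matrix S ∈ Sp(2n, ℝ) admits an SVD of the form S = U · diag(Σ, Σ⁻¹) · V where U and V are orthogonal symplectic matrices (elements of O(2n) ∩ Sp(2n, ℝ)) and Σ is an n×n positive diagonal matrix. -/
open Matrix

open Module RealInnerProductSpace

theorem svd_pair_aux (m : ℕ) :
    ∀ (E : Type) [NormedAddCommGroup E] [InnerProductSpace ℝ E] [FiniteDimensional ℝ E]
      (J T : E →ₗ[ℝ] E),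
      (∀ x y : E, ⟪J x, y⟫ = -⟪x, J y⟫) →
      (∀ x : E, J (J x) = -x) →
      (∀ x y : E, ⟪T x, y⟫ = ⟪x, T y⟫) →
      (∀ x : E, x ≠ 0 → 0 < ⟪T x, x⟫) →
      (∀ x : E, T (J (T x)) = J x) →
      finrank ℝ E = 2 * m →
      ∃ (v : Fin m → E) (σ : Fin m → ℝ),
        Orthonormal ℝ (Sum.elim v (fun i => J (v i))) ∧
        (∀ i, 0 < σ i) ∧ (∀ i, T (v i) = σ i • v i) ∧
        (∀ i, T (J (v i)) = (σ i)⁻¹ • J (v i)) := by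
  induction m with
  | zero =>
    intro E _ _ _ J T _ _ _ _ _ _
    refine ⟨Fin.elim0, Fin.elim0, orthonormal_iff_ite.mpr ?_, fun i => i.elim0,
      fun i => i.elim0, fun i => i.elim0⟩
    rintro (i | i) <;> exact i.elim0
  | succ m ih =>
    intro E _ _ _ J T hJsk hJ2 hTsym hTpos hTJT hdim
    have hJJ : ∀ x y : E, ⟪J x, J y⟫ = ⟪x, y⟫ := by
      intro x y; rw [hJsk, hJ2, inner_neg_right, neg_neg]
    have hTsym' : T.IsSymmetric := hTsym
    set b := hTsym'.eigenvectorBasis hdim with hb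
    set i₀ : Fin (2 * (m + 1)) := ⟨0, by omega⟩ with hi₀
    set v₀ : E := b i₀ with hv₀def
    have hv₀ : T v₀ = hTsym'.eigenvalues hdim i₀ • v₀ := by
      exact_mod_cast hTsym'.apply_eigenvectorBasis hdim i₀
    set lam : ℝ := hTsym'.eigenvalues hdim i₀ with hlam
    have hv₀n : ‖v₀‖ = 1 := b.orthonormal.1 i₀
    have hv₀ne : v₀ ≠ 0 := by
      intro h; rw [h, norm_zero] at hv₀n; norm_num at hv₀n
    have hlampos : 0 < lam := by
      have := hTpos v₀ hv₀ne
      rw [hv₀, real_inner_smul_left, real_inner_self_eq_norm_sq, hv₀n] at this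
      simpa using this
    have hJv₀ : T (J v₀) = lam⁻¹ • J v₀ := by
      have h := hTJT v₀
      rw [hv₀, J.map_smul, T.map_smul] at h
      calc T (J v₀) = lam⁻¹ • (lam • T (J v₀)) := by
            rw [smul_smul, inv_mul_cancel₀ hlampos.ne', one_smul]
        _ = lam⁻¹ • J v₀ := by rw [h]
    have hv₀Jv₀ : ⟪v₀, J v₀⟫ = 0 := by
      have h := hJsk v₀ v₀
      have h2 := real_inner_comm v₀ (J v₀)
      linarith
    have hJv₀n : ‖J v₀‖ = 1 := by
      have : ⟪J v₀, J v₀⟫ = 1 := by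
        rw [hJJ, real_inner_self_eq_norm_sq, hv₀n]; norm_num
      rw [real_inner_self_eq_norm_sq] at this
      nlinarith [norm_nonneg (J v₀)]
    set K := (Submodule.span ℝ ({v₀, J v₀} : Set E))ᗮ with hK
    have mem_K_iff : ∀ x : E, x ∈ K ↔ ⟪v₀, x⟫ = 0 ∧ ⟪J v₀, x⟫ = 0 := by
      intro x
      constructor
      · intro h
        exact ⟨h v₀ (Submodule.subset_span (by simp)),
          h (J v₀) (Submodule.subset_span (by simp))⟩
      · rintro ⟨h1, h2⟩
        intro u hu
        induction hu using Submodule.span_induction with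
        | mem u hu => rcases hu with h | h <;> subst h <;> assumption
        | zero => simp
        | add u v _ _ hu hv => rw [inner_add_left, hu, hv]; ring
        | smul c u _ hu => rw [real_inner_smul_left, hu]; ring
    have hTK : ∀ x ∈ K, T x ∈ K := by
      intro x hx
      rw [mem_K_iff] at hx ⊢
      constructor
      · rw [real_inner_comm, hTsym, hv₀, real_inner_smul_right, real_inner_comm, hx.1]; ring
      · rw [real_inner_comm, hTsym, hJv₀, real_inner_smul_right, real_inner_comm, hx.2]; ring
    have hJK : ∀ x ∈ K, J x ∈ K := by
      intro x hx
      rw [mem_K_iff] at hx ⊢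
      constructor
      · have := hJsk v₀ x
        linarith [hx.2]
      · rw [hJJ, hx.1]
    set J' : K →ₗ[ℝ] K := J.restrict hJK with hJ'
    set T' : K →ₗ[ℝ] K := T.restrict hTK with hT'
    have hcoeJ' : ∀ x : K, ((J' x : E)) = J (x : E) := fun x => rfl
    have hcoeT' : ∀ x : K, ((T' x : E)) = T (x : E) := fun x => rfl
    have horthpair : Orthonormal ℝ (![v₀, J v₀]) := by
      rw [orthonormal_iff_ite]
      intro i j
      fin_cases i <;> fin_cases j
      · simp [real_inner_self_eq_norm_sq, hv₀n]
      · simpa using hv₀Jv₀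
      · rw [real_inner_comm]
        simpa using hv₀Jv₀
      · simp [real_inner_self_eq_norm_sq, hJv₀n]
    have hrange : Set.range ![v₀, J v₀] = {v₀, J v₀} := by
      exact Matrix.range_cons_cons_empty v₀ (J v₀) ![]
    have hfr2 : finrank ℝ (Submodule.span ℝ ({v₀, J v₀} : Set E)) = 2 := by
      rw [← hrange, finrank_span_eq_card horthpair.linearIndependent, Fintype.card_fin]
    have hKdim : finrank ℝ K = 2 * m := by
      have h := Submodule.finrank_add_finrank_orthogonal
        (K := Submodule.span ℝ ({v₀, J v₀} : Set E)) (E := E)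
      rw [hfr2] at h
      rw [hdim] at h
      rw [hK]
      omega
    obtain ⟨w, σ', horth', hσ', hTw, hTJw⟩ :=
      ih K J' T'
        (by intro x y
            show (inner ℝ ((J' x : E)) ((y : E)) : ℝ) = -inner ℝ (x : E) ((J' y : E))
            rw [hcoeJ', hcoeJ']; exact hJsk _ _)
        (by intro x
            apply Subtype.ext
            show ((J' (J' x) : E)) = -(x : E)
            rw [hcoeJ', hcoeJ']; exact hJ2 _)
        (by intro x y
            show (inner ℝ ((T' x : E)) ((y : E)) : ℝ) = inner ℝ (x : E) ((T' y : E))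
            rw [hcoeT', hcoeT']; exact hTsym _ _)
        (by intro x hx
            have hx' : (x : E) ≠ 0 := fun h => hx (by exact_mod_cast h)
            show (0 : ℝ) < inner ℝ ((T' x : E)) ((x : E))
            rw [hcoeT']; exact hTpos _ hx')
        (by intro x
            apply Subtype.ext
            show ((T' (J' (T' x)) : E)) = J (x : E)
            rw [hcoeT', hcoeJ', hcoeT']; exact hTJT _)
        hKdim
    set v : Fin (m + 1) → E := Fin.cons v₀ (fun i => (w i : E)) with hv
    set σ : Fin (m + 1) → ℝ := Fin.cons lam σ' with hσ
    have hwK : ∀ i, ((w i : E)) ∈ K := fun i => (w i).2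
    have horthK := orthonormal_iff_ite.mp horth'
    have hww : ∀ i j, (inner ℝ ((w i : E)) ((w j : E)) : ℝ) = if i = j then 1 else 0 := by
      intro i j
      have h := horthK (Sum.inl i) (Sum.inl j)
      simpa [Submodule.coe_inner] using h
    have hwJw : ∀ i j, (inner ℝ ((w i : E)) (J ((w j : E))) : ℝ) = 0 := by
      intro i j
      have h := horthK (Sum.inl i) (Sum.inr j)
      simpa [Submodule.coe_inner, hcoeJ'] using h
    have hKv : ∀ x ∈ K, (inner ℝ v₀ x : ℝ) = 0 ∧ (inner ℝ (J v₀) x : ℝ) = 0 :=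
      fun x hx => (mem_K_iff x).1 hx
    have hTv : ∀ i, T (v i) = σ i • v i := by
      intro i
      refine Fin.cases ?_ ?_ i
      · simpa [hv, hσ] using hv₀
      · intro i
        have h2 : T ((w i : E)) = σ' i • ((w i : E)) := by
          calc T ((w i : E)) = ((T' (w i) : E)) := (hcoeT' _).symm
            _ = (((σ' i • w i : K)) : E) := by rw [hTw]
            _ = σ' i • ((w i : E)) := rfl
        simpa [hv, hσ] using h2
    have hTJv : ∀ i, T (J (v i)) = (σ i)⁻¹ • J (v i) := by
      intro i
      refine Fin.cases ?_ ?_ i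
      · simpa [hv, hσ] using hJv₀
      · intro i
        have h2 : T (J ((w i : E))) = (σ' i)⁻¹ • J ((w i : E)) := by
          calc T (J ((w i : E))) = ((T' (J' (w i)) : E)) := by rw [hcoeT', hcoeJ']
            _ = (((σ' i)⁻¹ • J' (w i) : K) : E) := by rw [hTJw]
            _ = (σ' i)⁻¹ • J ((w i : E)) := by rw [Submodule.coe_smul, hcoeJ']
        simpa [hv, hσ] using h2
    have hvv : ∀ i j, (inner ℝ (v i) (v j) : ℝ) = if i = j then 1 else 0 := by
      intro i j
      refine Fin.cases ?_ ?_ i <;> [skip; intro i] <;> refine Fin.cases ?_ ?_ j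
      · simp [hv, real_inner_self_eq_norm_sq, hv₀n]
      · intro j
        simp [hv, (hKv _ (hwK j)).1, (Fin.succ_ne_zero j).symm]
      · rw [real_inner_comm]
        simp [hv, (hKv _ (hwK i)).1, Fin.succ_ne_zero i]
      · intro j
        simp [hv, hww i j, Fin.succ_inj]
    have hvJv : ∀ i j, (inner ℝ (v i) (J (v j)) : ℝ) = 0 := by
      intro i j
      refine Fin.cases ?_ ?_ i <;> [skip; intro i] <;> refine Fin.cases ?_ ?_ j
      · simpa [hv] using hv₀Jv₀
      · intro j
        simpa [hv] using (hKv _ (hJK _ (hwK j))).1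
      · rw [real_inner_comm]
        simpa [hv] using (hKv _ (hwK i)).2
      · intro j
        simpa [hv] using hwJw i j
    have hpos : ∀ i, 0 < σ i := by
      intro i
      refine Fin.cases ?_ ?_ i
      · simpa [hσ] using hlampos
      · intro i; simpa [hσ] using hσ' i
    refine ⟨v, σ, orthonormal_iff_ite.mpr ?_, hpos, hTv, hTJv⟩
    rintro (i | i) (j | j)
    · simpa using hvv i j
    · simpa using hvJv i j
    · have h2 := hJsk (v i) (v j)
      simp only [Sum.elim_inl, Sum.elim_inr]
      rw [h2, hvJv i j]
      simp
    · simp only [Sum.elim_inr]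
      rw [hJJ, hvv i j]
      simp [Sum.inr.injEq]

theorem spd_symplectic_diag (n : ℕ)
    (A : Matrix (Fin n ⊕ Fin n) (Fin n ⊕ Fin n) ℝ)
    (hAsym : Aᵀ = A)
    (hApos : ∀ x : (Fin n ⊕ Fin n) → ℝ, x ≠ 0 → 0 < A *ᵥ x ⬝ᵥ x)
    (hAsymp : A * Matrix.fromBlocks 0 1 (-1) 0 * A = Matrix.fromBlocks 0 1 (-1) 0) :
    ∃ (W : Matrix (Fin n ⊕ Fin n) (Fin n ⊕ Fin n) ℝ) (σ : Fin n → ℝ),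
      Wᵀ * W = 1 ∧
      Wᵀ * Matrix.fromBlocks 0 1 (-1) 0 * W = Matrix.fromBlocks 0 1 (-1) 0 ∧
      (∀ i, 0 < σ i) ∧
      A * W = W * Matrix.diagonal (Sum.elim σ fun i => (σ i)⁻¹) := by
  set Jn : Matrix (Fin n ⊕ Fin n) (Fin n ⊕ Fin n) ℝ := Matrix.fromBlocks 0 1 (-1) 0 with hJn
  have hJnJ : Jn = -(Matrix.J (Fin n) ℝ) := by
    rw [hJn, Matrix.J, Matrix.fromBlocks_neg]
    norm_num
  have hJnt : Jnᵀ = -Jn := by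
    rw [hJnJ, transpose_neg, Matrix.J_transpose, neg_neg]
  have hJn2 : Jn * Jn = -1 := by
    rw [hJnJ, Matrix.neg_mul, Matrix.mul_neg, neg_neg, Matrix.J_squared]
  set E := EuclideanSpace ℝ (Fin n ⊕ Fin n) with hE
  set T : E →ₗ[ℝ] E := Matrix.toEuclideanLin A with hT
  set Jl : E →ₗ[ℝ] E := Matrix.toEuclideanLin Jn with hJl
  have happT : ∀ (x : E) (r), T x r = (A *ᵥ (x : (Fin n ⊕ Fin n) → ℝ)) r := fun _ _ => rfl
  have happJ : ∀ (x : E) (r), Jl x r = (Jn *ᵥ (x : (Fin n ⊕ Fin n) → ℝ)) r := fun _ _ => rfl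
  have hinner : ∀ x y : E, ⟪x, y⟫ = (x : (Fin n ⊕ Fin n) → ℝ) ⬝ᵥ (y : (Fin n ⊕ Fin n) → ℝ) := by
    intro x y
    rw [PiLp.inner_apply]
    simp [RCLike.inner_apply, dotProduct, mul_comm]
  have hdotsym : ∀ (M : Matrix (Fin n ⊕ Fin n) (Fin n ⊕ Fin n) ℝ) (x y : (Fin n ⊕ Fin n) → ℝ),
      (M *ᵥ x) ⬝ᵥ y = x ⬝ᵥ (Mᵀ *ᵥ y) := by
    intro M x y
    rw [Matrix.dotProduct_mulVec, Matrix.vecMul_transpose]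
  obtain ⟨v, σ, horth, hσ, hTv, hTJv⟩ :=
    svd_pair_aux n E Jl T
      (by intro x y
          rw [hinner, hinner]
          show (Jn *ᵥ x) ⬝ᵥ y = -(x ⬝ᵥ (Jn *ᵥ y))
          rw [hdotsym, hJnt, Matrix.neg_mulVec, dotProduct_neg])
      (by intro x
          refine PiLp.ext fun r => ?_
          show ((Jn *ᵥ (Jn *ᵥ x.ofLp))) r = (-x.ofLp) r
          rw [Matrix.mulVec_mulVec, hJn2, Matrix.neg_mulVec, Matrix.one_mulVec])
      (by intro x y
          rw [hinner, hinner]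
          show (A *ᵥ x) ⬝ᵥ y = x ⬝ᵥ (A *ᵥ y)
          rw [hdotsym, hAsym])
      (by intro x hx
          rw [hinner]
          exact hApos x (by simpa using hx))
      (by intro x
          refine PiLp.ext fun r => ?_
          show (A *ᵥ (Jn *ᵥ (A *ᵥ x.ofLp))) r = (Jn *ᵥ x.ofLp) r
          rw [Matrix.mulVec_mulVec, Matrix.mulVec_mulVec, hAsymp])
      (by show finrank ℝ (EuclideanSpace ℝ (Fin n ⊕ Fin n)) = 2 * n
          rw [finrank_euclideanSpace, Fintype.card_sum, Fintype.card_fin]; ring)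
  set W : Matrix (Fin n ⊕ Fin n) (Fin n ⊕ Fin n) ℝ :=
    Matrix.of fun r c => Sum.elim (fun i => v i r) (fun i => -(Jl (v i) r)) c with hW
  have hito := orthonormal_iff_ite.mp horth
  have havv : ∀ i j, ∑ r, v i r * v j r = if i = j then (1:ℝ) else 0 := by
    intro i j
    have h := hito (Sum.inl i) (Sum.inl j)
    rw [hinner] at h
    simpa [dotProduct] using h
  have havJ : ∀ i j, ∑ r, v i r * Jl (v j) r = 0 := by
    intro i j
    have h := hito (Sum.inl i) (Sum.inr j)
    rw [hinner] at h
    simpa [dotProduct] using h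
  have haJv : ∀ i j, ∑ r, Jl (v i) r * v j r = 0 := by
    intro i j
    have h := hito (Sum.inr i) (Sum.inl j)
    rw [hinner] at h
    simpa [dotProduct] using h
  have haJJ : ∀ i j, ∑ r, Jl (v i) r * Jl (v j) r = if i = j then (1:ℝ) else 0 := by
    intro i j
    have h := hito (Sum.inr i) (Sum.inr j)
    rw [hinner] at h
    simpa [dotProduct] using h
  refine ⟨W, σ, ?_, ?_, hσ, ?_⟩
  · ext c c'
    rw [Matrix.mul_apply]
    rcases c with i | i <;> rcases c' with j | j <;>
      simp only [hW, transpose_apply, of_apply, Sum.elim_inl, Sum.elim_inr, mul_neg, neg_mul,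
        neg_neg, Finset.sum_neg_distrib]
    · rw [havv i j]
      simp [Matrix.one_apply]
    · rw [havJ i j]
      simp [Matrix.one_apply]
    · rw [haJv i j]
      simp [Matrix.one_apply]
    · rw [haJJ i j]
      simp [Matrix.one_apply]
  · rw [Matrix.mul_assoc]
    have hJnW : ∀ s (c : Fin n ⊕ Fin n),
        (Jn * W) s c = Sum.elim (fun j => Jl (v j) s) (fun j => v j s) c := by
      intro s c
      rcases c with j | j
      · rw [Matrix.mul_apply]
        rfl
      · have h1 : (Jn * W) s (Sum.inr j)
            = -((Jn *ᵥ (Jn *ᵥ (v j : (Fin n ⊕ Fin n) → ℝ))) s) := by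
          rw [Matrix.mul_apply]
          simp only [hW, of_apply, Sum.elim_inr, mul_neg]
          rw [Finset.sum_neg_distrib]
          congr 1
        rw [h1, Matrix.mulVec_mulVec, hJn2, Matrix.neg_mulVec, Matrix.one_mulVec]
        simp
    ext c c'
    rw [Matrix.mul_apply]
    have hterm : ∀ s, Wᵀ c s * (Jn * W) s c'
        = (W s c) * (Sum.elim (fun j => Jl (v j) s) (fun j => v j s) c') := by
      intro s
      rw [transpose_apply, hJnW]
    rw [Finset.sum_congr rfl fun s _ => hterm s]
    rcases c with i | i <;> rcases c' with j | j <;>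
      simp only [hW, of_apply, Sum.elim_inl, Sum.elim_inr, mul_neg, neg_mul, neg_neg,
        Finset.sum_neg_distrib]
    · rw [havJ i j]
      simp [hJn]
    · rw [havv i j]
      simp [hJn, Matrix.one_apply]
    · rw [haJJ i j]
      simp [hJn, Matrix.one_apply]
    · rw [haJv i j]
      simp [hJn]
  · ext r c
    rw [Matrix.mul_apply, Matrix.mul_diagonal]
    rcases c with i | i <;>
      simp only [hW, of_apply, Sum.elim_inl, Sum.elim_inr, mul_neg, neg_mul,
        Finset.sum_neg_distrib]
    · have h1 : ∑ s, A r s * v i s = (A *ᵥ (v i : (Fin n ⊕ Fin n) → ℝ)) r := rfl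
      rw [h1, ← happT (v i) r, hTv i]
      show σ i * v i r = v i r * σ i
      ring
    · have h1 : ∑ s, A r s * Jl (v i) s = (A *ᵥ ((Jl (v i) : E) : (Fin n ⊕ Fin n) → ℝ)) r := rfl
      rw [h1, ← happT (Jl (v i)) r, hTJv i]
      show -((σ i)⁻¹ * Jl (v i) r) = -(Jl (v i) r * (σ i)⁻¹)
      ring

lemma diagonal_eq_one'' {m : Type*} [Fintype m] [DecidableEq m] (f : m → ℝ)
    (hf : ∀ i, f i = 1) : Matrix.diagonal f = 1 := by
  have h : f = fun _ => 1 := funext hf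
  rw [h]
  exact Matrix.diagonal_one

/-- Symplectic structured SVD, real case: every real symplectic matrix `S` equals
`U · diag(Σ, Σ⁻¹) · V` with `U, V` orthogonal symplectic and `Σ` positive diagonal. -/
theorem symplectic_structured_svd_real (n : ℕ)
    (S : Matrix (Fin n ⊕ Fin n) (Fin n ⊕ Fin n) ℝ)
    (hS : Sᵀ * Matrix.fromBlocks 0 1 (-1) 0 * S = Matrix.fromBlocks 0 1 (-1) 0) :
    ∃ (U V : Matrix (Fin n ⊕ Fin n) (Fin n ⊕ Fin n) ℝ) (σ : Fin n → ℝ),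
      Uᵀ * U = 1 ∧
      Uᵀ * Matrix.fromBlocks 0 1 (-1) 0 * U = Matrix.fromBlocks 0 1 (-1) 0 ∧
      Vᵀ * V = 1 ∧
      Vᵀ * Matrix.fromBlocks 0 1 (-1) 0 * V = Matrix.fromBlocks 0 1 (-1) 0 ∧
      (∀ i, 0 < σ i) ∧
      S = U * Matrix.fromBlocks (Matrix.diagonal σ) 0 0
            (Matrix.diagonal fun i => (σ i)⁻¹) * V := by
  set Jn : Matrix (Fin n ⊕ Fin n) (Fin n ⊕ Fin n) ℝ := Matrix.fromBlocks 0 1 (-1) 0 with hJn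
  have hJnJ : Jn = -(Matrix.J (Fin n) ℝ) := by
    rw [hJn, Matrix.J, Matrix.fromBlocks_neg]
    norm_num
  -- S is in the symplectic group (w.r.t. Matrix.J)
  have hSmem : S ∈ Matrix.symplecticGroup (Fin n) ℝ := by
    rw [SymplecticGroup.mem_iff']
    have h := hS
    rw [hJnJ] at h
    rw [Matrix.mul_neg, Matrix.neg_mul] at h
    exact neg_injective h
  have hdet : IsUnit S.det := SymplecticGroup.symplectic_det hSmem
  have hSinj : Function.Injective (S.mulVec) := by
    rw [Matrix.mulVec_injective_iff_isUnit]
    exact (Matrix.isUnit_iff_isUnit_det S).mpr hdet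
  set A : Matrix (Fin n ⊕ Fin n) (Fin n ⊕ Fin n) ℝ := Sᵀ * S with hA
  have hAsym : Aᵀ = A := by
    rw [hA, Matrix.transpose_mul, Matrix.transpose_transpose]
  have hApos : ∀ x : (Fin n ⊕ Fin n) → ℝ, x ≠ 0 → 0 < A *ᵥ x ⬝ᵥ x := by
    intro x hx
    have h1 : A *ᵥ x = Sᵀ *ᵥ (S *ᵥ x) := by rw [hA, ← Matrix.mulVec_mulVec]
    have h2 : (Sᵀ *ᵥ (S *ᵥ x)) ⬝ᵥ x = (S *ᵥ x) ⬝ᵥ (S *ᵥ x) := by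
      rw [dotProduct_comm, Matrix.dotProduct_mulVec, Matrix.vecMul_transpose]
    rw [h1, h2]
    have hne : S *ᵥ x ≠ 0 := by
      intro h
      apply hx
      have := hSinj (a₁ := x) (a₂ := 0)
      simp only [Matrix.mulVec_zero] at this
      exact this h
    have hnonneg : 0 ≤ (S *ᵥ x) ⬝ᵥ (S *ᵥ x) :=
      Finset.sum_nonneg fun r _ => mul_self_nonneg _
    rcases hnonneg.lt_or_eq with h | h
    · exact h
    · exact absurd (dotProduct_self_eq_zero.mp h.symm) hne
  have hAmem : A ∈ Matrix.symplecticGroup (Fin n) ℝ := by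
    rw [hA]
    exact mul_mem (SymplecticGroup.transpose_mem hSmem) hSmem
  have hAsymp : A * Jn * A = Jn := by
    have h := (SymplecticGroup.mem_iff').mp hAmem
    rw [hAsym] at h
    rw [hJnJ, Matrix.mul_neg, Matrix.neg_mul]
    exact congrArg Neg.neg h
  obtain ⟨W, σ0, hW1, hWJ, hσ0, hAW⟩ := spd_symplectic_diag n A hAsym hApos hAsymp
  have hWWt : W * Wᵀ = 1 := mul_eq_one_comm.mp hW1
  set τ : Fin n → ℝ := fun i => Real.sqrt (σ0 i) with hτ
  have hτpos : ∀ i, 0 < τ i := fun i => Real.sqrt_pos.mpr (hσ0 i)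
  have hτ2 : ∀ i, τ i * τ i = σ0 i := fun i => Real.mul_self_sqrt (hσ0 i).le
  set D : Matrix (Fin n ⊕ Fin n) (Fin n ⊕ Fin n) ℝ :=
    Matrix.diagonal (Sum.elim τ fun i => (τ i)⁻¹) with hD
  set Dinv : Matrix (Fin n ⊕ Fin n) (Fin n ⊕ Fin n) ℝ :=
    Matrix.diagonal (Sum.elim (fun i => (τ i)⁻¹) τ) with hDinv
  have hDinvD : Dinv * D = 1 := by
    rw [hD, hDinv, Matrix.diagonal_mul_diagonal]
    refine diagonal_eq_one'' _ fun c => ?_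
    rcases c with i | i <;>
      simp [inv_mul_cancel₀ (hτpos i).ne', mul_inv_cancel₀ (hτpos i).ne']
  set Sg : Fin n ⊕ Fin n → ℝ := Sum.elim σ0 fun i => (σ0 i)⁻¹ with hSg
  have hDinvSgD : Dinv * (Matrix.diagonal Sg * Dinv) = 1 := by
    rw [hDinv, hSg, Matrix.diagonal_mul_diagonal, Matrix.diagonal_mul_diagonal]
    refine diagonal_eq_one'' _ fun c => ?_
    rcases c with i | i
    · simp only [Sum.elim_inl]
      rw [← hτ2 i]
      field_simp
      rw [div_self (hτpos i).ne']
    · simp only [Sum.elim_inr]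
      rw [← hτ2 i]
      field_simp
      rw [div_self (hτpos i).ne']
  have hd12 : Matrix.diagonal (fun i => (τ i)⁻¹) * Matrix.diagonal τ
      = (1 : Matrix (Fin n) (Fin n) ℝ) := by
    rw [Matrix.diagonal_mul_diagonal]
    exact diagonal_eq_one'' _ fun i => inv_mul_cancel₀ (hτpos i).ne'
  have hd21 : Matrix.diagonal τ * Matrix.diagonal (fun i => (τ i)⁻¹)
      = (1 : Matrix (Fin n) (Fin n) ℝ) := by
    rw [Matrix.diagonal_mul_diagonal]
    exact diagonal_eq_one'' _ fun i => mul_inv_cancel₀ (hτpos i).ne'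
  have hDinvJn : Dinv * (Jn * Dinv) = Jn := by
    rw [hDinv, ← Matrix.fromBlocks_diagonal, hJn, Matrix.fromBlocks_multiply,
      Matrix.fromBlocks_multiply]
    simp [hd12, hd21, (fun i => mul_inv_cancel₀ (hτpos i).ne' : ∀ i, τ i * (τ i)⁻¹ = 1),
      (fun i => inv_mul_cancel₀ (hτpos i).ne' : ∀ i, (τ i)⁻¹ * τ i = 1),
      Matrix.diagonal_neg, Matrix.diagonal_one]
    ext i j
    by_cases h : i = j <;> simp [Matrix.diagonal_apply, Matrix.one_apply, h]
  have hDinvT : Dinvᵀ = Dinv := by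
    rw [hDinv]; exact Matrix.diagonal_transpose _
  refine ⟨S * (W * Dinv), Wᵀ, τ, ?_, ?_, ?_, ?_, hτpos, ?_⟩
  · have key : Sᵀ * (S * (W * Dinv)) = W * (Matrix.diagonal Sg * Dinv) := by
      rw [← Matrix.mul_assoc Sᵀ S (W * Dinv), ← hA, ← Matrix.mul_assoc A W Dinv, hAW,
        Matrix.mul_assoc]
    calc (S * (W * Dinv))ᵀ * (S * (W * Dinv))
        = Dinv * (Wᵀ * (Sᵀ * (S * (W * Dinv)))) := by
          simp only [Matrix.transpose_mul, hDinvT, Matrix.mul_assoc]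
      _ = Dinv * (Wᵀ * (W * (Matrix.diagonal Sg * Dinv))) := by rw [key]
      _ = Dinv * (Matrix.diagonal Sg * Dinv) := by
          rw [← Matrix.mul_assoc Wᵀ W (Matrix.diagonal Sg * Dinv), hW1, Matrix.one_mul]
      _ = 1 := hDinvSgD
  · have key2 : Sᵀ * (Jn * (S * (W * Dinv))) = Jn * (W * Dinv) := by
      rw [← Matrix.mul_assoc Jn S (W * Dinv), ← Matrix.mul_assoc Sᵀ (Jn * S) (W * Dinv),
        ← Matrix.mul_assoc Sᵀ Jn S, hS]
    have key3 : Wᵀ * (Jn * (W * Dinv)) = Jn * Dinv := by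
      rw [← Matrix.mul_assoc Jn W Dinv, ← Matrix.mul_assoc Wᵀ (Jn * W) Dinv,
        ← Matrix.mul_assoc Wᵀ Jn W, hWJ]
    calc (S * (W * Dinv))ᵀ * Jn * (S * (W * Dinv))
        = Dinv * (Wᵀ * (Sᵀ * (Jn * (S * (W * Dinv))))) := by
          simp only [Matrix.transpose_mul, hDinvT, Matrix.mul_assoc]
      _ = Dinv * (Wᵀ * (Jn * (W * Dinv))) := by rw [key2]
      _ = Dinv * (Jn * Dinv) := by rw [key3]
      _ = Jn := hDinvJn
  · rw [Matrix.transpose_transpose]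
    exact hWWt
  · rw [Matrix.transpose_transpose]
    calc W * Jn * Wᵀ = W * (Wᵀ * Jn * W) * Wᵀ := by rw [hWJ]
      _ = W * Wᵀ * Jn * (W * Wᵀ) := by simp only [Matrix.mul_assoc]
      _ = Jn := by rw [hWWt, Matrix.one_mul, Matrix.mul_one]
  · rw [Matrix.fromBlocks_diagonal, ← hD]
    calc S = S * (W * Wᵀ) := by rw [hWWt, Matrix.mul_one]
      _ = S * (W * (Dinv * (D * Wᵀ))) := by
          rw [← Matrix.mul_assoc Dinv D Wᵀ, hDinvD, Matrix.one_mul]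
      _ = S * (W * Dinv) * D * Wᵀ := by simp only [Matrix.mul_assoc]
end

section
/- (Hyperbolic CS decomposition, real) Let n = p + q with p ≥ q. Any indefinite orthogonal matrix G (Gᵀ I_{p,q} G = I_{p,q}) can be written as G = diag(O_p, O_q) · M · diag(O_p', O_q') where O_p, O_p' ∈ O(p), O_q, O_q' ∈ O(q), and M = [[Ch, 0, Sh], [0, I_{p−q}, 0], [Sh, 0, Ch]] with Ch = diag(cosh θ_l), Sh = diag(sinh θ_l) for real numbers θ_1, …, θ_q. -/
open Matrix


set_option maxHeartbeats 1000000

section Helpers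

variable {a b c : Type*} [Fintype b] [DecidableEq b]

lemma mulLeftCancel (M N : Matrix b b ℝ) (h : M * N = 1) (X : Matrix b c ℝ) :
    M * (N * X) = X := by rw [← Matrix.mul_assoc, h, Matrix.one_mul]

omit [DecidableEq b] in
lemma mulFuse {d e : Type*} [Fintype e] (M : Matrix d e ℝ) {N : Matrix e b ℝ}
    {P : Matrix d b ℝ} (h : M * N = P) (X : Matrix b c ℝ) :
    M * (N * X) = P * X := by rw [← Matrix.mul_assoc, h]

end Helpers

lemma exists_orthogonal_factor {α β : Type*} [Fintype α] [Fintype β] [DecidableEq α]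
    [DecidableEq β] (E : Matrix (α ⊕ β) α ℝ) (s : α → ℝ)
    (hE : Eᵀ * E = Matrix.diagonal (fun l => s l ^ 2)) :
    ∃ O : Matrix (α ⊕ β) (α ⊕ β) ℝ, Oᵀ * O = 1 ∧ O * Oᵀ = 1 ∧
      E = O * Matrix.fromRows (Matrix.diagonal s) 0 := by
  classical
  have key : ∀ l m, ∑ k, E k l * E k m = if l = m then s l ^ 2 else 0 := by
    intro l m
    have := congrFun (congrFun hE l) m
    simpa [Matrix.mul_apply, Matrix.diagonal_apply] using this
  set v : α ⊕ β → EuclideanSpace ℝ (α ⊕ β) := fun i =>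
    match i with
    | Sum.inl l => (WithLp.equiv 2 _).symm (fun k => (s l)⁻¹ * E k l)
    | Sum.inr _ => 0 with hv
  have hvinner : ∀ l m, inner (𝕜 := ℝ) (v (Sum.inl l)) (v (Sum.inl m))
      = (s l)⁻¹ * (s m)⁻¹ * ∑ k, E k l * E k m := by
    intro l m
    simp only [hv, PiLp.inner_apply, RCLike.inner_apply, conj_trivial,
      WithLp.equiv_symm_apply, PiLp.toLp_apply, Finset.mul_sum]
    exact Finset.sum_congr rfl fun k _ => by ring
  have horth : Orthonormal ℝ ((Sum.inl '' {l | s l ≠ 0}).restrict v) := by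
    rw [orthonormal_iff_ite]
    rintro ⟨i, hi⟩ ⟨j, hj⟩
    obtain ⟨l, hl, rfl⟩ := hi
    obtain ⟨m, hm, rfl⟩ := hj
    show inner ℝ (v (Sum.inl l)) (v (Sum.inl m)) = _
    simp only [hvinner, key]
    rcases eq_or_ne l m with rfl | hlm
    · have hl' : s l ≠ 0 := hl
      simp [Subtype.ext_iff]
      rw [sq]
      field_simp
    · simp [hlm, Subtype.ext_iff, hlm]
  obtain ⟨b, hb⟩ := horth.exists_orthonormalBasis_extension_of_card_eq
    (by simp [finrank_euclideanSpace])
  refine ⟨Matrix.of fun k i => b i k, ?_, ?_, ?_⟩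
  · ext i j
    have := b.orthonormal
    rw [orthonormal_iff_ite] at this
    have h := this i j
    simp only [PiLp.inner_apply, RCLike.inner_apply, conj_trivial] at h
    simpa [Matrix.mul_apply, Matrix.one_apply, mul_comm] using h
  · rw [mul_eq_one_comm]
    ext i j
    have := b.orthonormal
    rw [orthonormal_iff_ite] at this
    have h := this i j
    simp only [PiLp.inner_apply, RCLike.inner_apply, conj_trivial] at h
    simpa [Matrix.mul_apply, Matrix.one_apply, mul_comm] using h
  · ext k l
    have hsum : (Matrix.of (fun k i => b i k) *
        Matrix.fromRows (Matrix.diagonal s) (0 : Matrix β α ℝ)) k l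
        = b (Sum.inl l) k * s l := by
      simp only [Matrix.mul_apply, Matrix.of_apply, Fintype.sum_sum_type,
        Matrix.fromRows_apply_inl, Matrix.fromRows_apply_inr, Matrix.diagonal_apply]
      simp [Finset.sum_ite_eq', mul_comm]
    refine Eq.trans ?_ hsum.symm
    rcases eq_or_ne (s l) 0 with hsl | hsl
    · have hz : ∑ k, E k l * E k l = 0 := by simp [key, hsl]
      have : E k l = 0 := by
        have hnn : ∀ i ∈ Finset.univ, (0:ℝ) ≤ E i l * E i l := fun i _ => mul_self_nonneg _
        have := (Finset.sum_eq_zero_iff_of_nonneg hnn).mp hz k (Finset.mem_univ k)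
        nlinarith [this]
      simp [this, hsl]
    · have hmem : (Sum.inl l : α ⊕ β) ∈ Sum.inl '' {l | s l ≠ 0} := Set.mem_image_of_mem _ hsl
      rw [hb _ hmem]
      simp only [hv, WithLp.equiv_symm_apply, PiLp.toLp_apply]
      field_simp

/-- Hyperbolic CS decomposition, real case, with the index set of size `n = p + q`
realized as `(Fin q ⊕ Fin (p-q)) ⊕ Fin q`, so that the first `p` indices carry `+1`
in the signature matrix `I_{p,q}` and the last `q` indices carry `-1`. -/
theorem hyperbolic_cs_decomposition (p q : ℕ) (hpq : q ≤ p)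
    (G : Matrix ((Fin q ⊕ Fin (p - q)) ⊕ Fin q) ((Fin q ⊕ Fin (p - q)) ⊕ Fin q) ℝ)
    (hG : Gᵀ * Matrix.fromBlocks 1 0 0 (-1) * G = Matrix.fromBlocks 1 0 0 (-1)) :
    ∃ (Op Op' : Matrix (Fin q ⊕ Fin (p - q)) (Fin q ⊕ Fin (p - q)) ℝ)
      (Oq Oq' : Matrix (Fin q) (Fin q) ℝ) (θ : Fin q → ℝ),
      Opᵀ * Op = 1 ∧ Op'ᵀ * Op' = 1 ∧ Oqᵀ * Oq = 1 ∧ Oq'ᵀ * Oq' = 1 ∧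
      G = Matrix.fromBlocks Op 0 0 Oq *
          Matrix.fromBlocks
            (Matrix.fromBlocks (Matrix.diagonal fun l => Real.cosh (θ l)) 0 0 1)
            (Matrix.of fun i j => match i with
              | Sum.inl i' => if i' = j then Real.sinh (θ j) else 0
              | Sum.inr _ => 0)
            (Matrix.of fun i j => match j with
              | Sum.inl j' => if i = j' then Real.sinh (θ i) else 0
              | Sum.inr _ => 0)
            (Matrix.diagonal fun l => Real.cosh (θ l)) *
          Matrix.fromBlocks Op' 0 0 Oq' := by
  classical
  set A := G.toBlocks₁₁ with hA
  set B := G.toBlocks₁₂ with hB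
  set C := G.toBlocks₂₁ with hC
  set D := G.toBlocks₂₂ with hD0
  have hGb : G = fromBlocks A B C D := (fromBlocks_toBlocks G).symm
  clear_value A B C D
  -- block equations from hG
  have key := hG
  rw [hGb] at key
  simp only [fromBlocks_transpose, fromBlocks_multiply, Matrix.mul_one, Matrix.mul_zero,
    Matrix.zero_mul, Matrix.mul_neg, Matrix.neg_mul, add_zero, zero_add, Matrix.one_mul,
    ← sub_eq_add_neg] at key
  have e11 : Aᵀ * A - Cᵀ * C = 1 := by
    have h := congrArg Matrix.toBlocks₁₁ key
    simpa [Matrix.toBlocks_fromBlocks₁₁, sub_eq_add_neg] using h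
  have e22 : Bᵀ * B - Dᵀ * D = -1 := by
    have h := congrArg Matrix.toBlocks₂₂ key
    simpa [Matrix.toBlocks_fromBlocks₂₂, sub_eq_add_neg] using h
  -- the dual relation G J Gᵀ = J
  have hJJ : (fromBlocks 1 0 0 (-1) : Matrix ((Fin q ⊕ Fin (p - q)) ⊕ Fin q)
      ((Fin q ⊕ Fin (p - q)) ⊕ Fin q) ℝ) * fromBlocks 1 0 0 (-1) = 1 := by
    simp [fromBlocks_multiply, ← fromBlocks_one]
  have h1 : Gᵀ * (fromBlocks 1 0 0 (-1) * G * fromBlocks 1 0 0 (-1)) = 1 := by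
    rw [← Matrix.mul_assoc, ← Matrix.mul_assoc, hG, hJJ]
  have h2 := mul_eq_one_comm.mp h1
  have hG' : G * fromBlocks 1 0 0 (-1) * Gᵀ = fromBlocks 1 0 0 (-1) := by
    have h3 : (fromBlocks 1 0 0 (-1) : Matrix ((Fin q ⊕ Fin (p - q)) ⊕ Fin q)
        ((Fin q ⊕ Fin (p - q)) ⊕ Fin q) ℝ) * (fromBlocks 1 0 0 (-1) * G * fromBlocks 1 0 0 (-1)
        * Gᵀ) = fromBlocks 1 0 0 (-1) := by rw [h2, Matrix.mul_one]
    calc G * fromBlocks 1 0 0 (-1) * Gᵀ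
        = (fromBlocks 1 0 0 (-1) * fromBlocks 1 0 0 (-1)) * G * fromBlocks 1 0 0 (-1) * Gᵀ := by
          rw [hJJ, Matrix.one_mul]
      _ = fromBlocks 1 0 0 (-1) * (fromBlocks 1 0 0 (-1) * G * fromBlocks 1 0 0 (-1) * Gᵀ) := by
          simp only [Matrix.mul_assoc]
      _ = fromBlocks 1 0 0 (-1) := h3
  have key2 := hG'
  rw [hGb] at key2
  simp only [fromBlocks_transpose, fromBlocks_multiply, Matrix.mul_one, Matrix.mul_zero,
    Matrix.zero_mul, Matrix.mul_neg, Matrix.neg_mul, add_zero, zero_add, Matrix.one_mul,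
    ← sub_eq_add_neg] at key2
  have f12 : A * Cᵀ - B * Dᵀ = 0 := by
    have h := congrArg Matrix.toBlocks₁₂ key2
    simpa [Matrix.toBlocks_fromBlocks₁₂, sub_eq_add_neg] using h
  have f22 : C * Cᵀ - D * Dᵀ = -1 := by
    have h := congrArg Matrix.toBlocks₂₂ key2
    simpa [Matrix.toBlocks_fromBlocks₂₂, sub_eq_add_neg] using h
  clear key key2 h1 h2 hG hG' hJJ
  -- spectral theory of DᵀD
  have hDD : Dᵀ * D = 1 + Bᵀ * B := by
    rw [sub_eq_iff_eq_add'.mp e22]; abel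
  have hsym : (Dᵀ * D).IsHermitian := by
    have h := Matrix.isHermitian_conjTranspose_mul_self D
    rwa [Matrix.conjTranspose_eq_transpose_of_trivial] at h
  set lam := hsym.eigenvalues with hlamdef
  set V : Matrix (Fin q) (Fin q) ℝ := (hsym.eigenvectorUnitary : Matrix (Fin q) (Fin q) ℝ)
    with hVdef
  have hVt : Vᵀ * V = 1 := by
    have h := hsym.eigenvectorUnitary.2.1
    rwa [Matrix.star_eq_conjTranspose, Matrix.conjTranspose_eq_transpose_of_trivial] at h
  have hVVt : V * Vᵀ = 1 := mul_eq_one_comm.mp hVt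
  have hspec : Dᵀ * D = V * Matrix.diagonal lam * Vᵀ := by
    have h := hsym.spectral_theorem
    rw [RCLike.ofReal_real_eq_id] at h
    simpa [Matrix.star_eq_conjTranspose, Matrix.conjTranspose_eq_transpose_of_trivial,
      Function.comp] using h
  clear_value lam V
  have hBB : Bᵀ * B = Dᵀ * D - 1 := by rw [hDD]; abel
  have hdiagsub : (Matrix.diagonal (fun l => lam l - 1) : Matrix (Fin q) (Fin q) ℝ)
      = Matrix.diagonal lam - 1 := by
    rw [← Matrix.diagonal_one, Matrix.diagonal_sub]
  have hBB2 : Bᵀ * B = V * Matrix.diagonal (fun l => lam l - 1) * Vᵀ := by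
    rw [hBB, hspec, hdiagsub, Matrix.mul_sub, Matrix.sub_mul, Matrix.mul_one, hVVt]
  have hEE : (B * V)ᵀ * (B * V) = Matrix.diagonal (fun l => lam l - 1) := by
    rw [Matrix.transpose_mul]
    simp only [Matrix.mul_assoc]
    rw [mulFuse _ hBB2]
    simp only [Matrix.mul_assoc]
    rw [mulLeftCancel _ _ hVt, hVt, Matrix.mul_one]
  have hlam1 : ∀ l, 1 ≤ lam l := by
    intro l
    have h := congrFun (congrFun hEE l) l
    simp only [Matrix.mul_apply, Matrix.transpose_apply, Matrix.diagonal_apply_eq] at h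
    have hnn : (0:ℝ) ≤ ∑ k, (B * V) k l * (B * V) k l :=
      Finset.sum_nonneg fun k _ => mul_self_nonneg _
    linarith [h ▸ hnn]
  -- hyperbolic angles
  set θ : Fin q → ℝ := fun l => Real.arsinh (Real.sqrt (lam l - 1)) with hθdef
  have hsinh_sq : ∀ l, Real.sinh (θ l) ^ 2 = lam l - 1 := by
    intro l
    rw [hθdef, Real.sinh_arsinh, Real.sq_sqrt (by linarith [hlam1 l])]
  have hcosh_sq : ∀ l, Real.cosh (θ l) ^ 2 = lam l := by
    intro l
    rw [Real.cosh_sq', hsinh_sq]; ring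
  have hcosh_ne : ∀ l, Real.cosh (θ l) ≠ 0 := fun l => (Real.cosh_pos _).ne'
  clear_value θ
  -- Ch, ChI and their interface facts
  set Ch : Matrix (Fin q) (Fin q) ℝ := Matrix.diagonal (fun l => Real.cosh (θ l)) with hChdef
  set ChI : Matrix (Fin q) (Fin q) ℝ := Matrix.diagonal (fun l => (Real.cosh (θ l))⁻¹)
    with hChIdef
  have hChT : Chᵀ = Ch := Matrix.diagonal_transpose _
  have hChIT : ChIᵀ = ChI := Matrix.diagonal_transpose _
  have hChChI : Ch * ChI = 1 := by
    rw [hChdef, hChIdef, Matrix.diagonal_mul_diagonal, ← Matrix.diagonal_one]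
    exact congrArg Matrix.diagonal (funext fun l => mul_inv_cancel₀ (hcosh_ne l))
  have hChIC : ChI * Ch = 1 := by
    rw [hChdef, hChIdef, Matrix.diagonal_mul_diagonal, ← Matrix.diagonal_one]
    exact congrArg Matrix.diagonal (funext fun l => inv_mul_cancel₀ (hcosh_ne l))
  have hChIlam : ChI * Matrix.diagonal lam * ChI = 1 := by
    rw [hChIdef, Matrix.diagonal_mul_diagonal, Matrix.diagonal_mul_diagonal,
      ← Matrix.diagonal_one]
    refine congrArg Matrix.diagonal (funext fun l => ?_)
    rw [← hcosh_sq l]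
    field_simp
  have hch2 : (Matrix.diagonal (fun l => Real.sinh (θ l) ^ 2) : Matrix (Fin q) (Fin q) ℝ)
      = Ch * Ch - 1 := by
    rw [hChdef, Matrix.diagonal_mul_diagonal, ← Matrix.diagonal_one, Matrix.diagonal_sub]
    refine congrArg Matrix.diagonal (funext fun l => ?_)
    rw [hsinh_sq l, ← hcosh_sq l]
    ring
  have h1SS : (1 : Matrix (Fin q) (Fin q) ℝ) +
      Matrix.diagonal (fun l => Real.sinh (θ l) * Real.sinh (θ l))
      = Ch * Ch := by
    rw [hChdef, Matrix.diagonal_mul_diagonal,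
      ← Matrix.diagonal_one, Matrix.diagonal_add]
    refine congrArg Matrix.diagonal (funext fun l => ?_)
    have h1 := hsinh_sq l
    have h2 := hcosh_sq l
    rw [pow_two] at h1 h2
    linarith
  have hChIS : ChI * (Matrix.diagonal fun l => Real.sinh (θ l))
      = (Matrix.diagonal fun l => Real.sinh (θ l)) * ChI := by
    rw [hChIdef, Matrix.diagonal_mul_diagonal, Matrix.diagonal_mul_diagonal]
    exact congrArg Matrix.diagonal (funext fun l => mul_comm _ _)
  clear_value Ch ChI
  -- U
  set U : Matrix (Fin q) (Fin q) ℝ := D * V * ChI with hUdef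
  have hUtU : Uᵀ * U = 1 := by
    rw [hUdef, Matrix.transpose_mul, Matrix.transpose_mul, hChIT]
    simp only [Matrix.mul_assoc]
    rw [mulFuse _ hspec]
    simp only [Matrix.mul_assoc]
    rw [mulLeftCancel _ _ hVt, mulLeftCancel _ _ hVt, ← Matrix.mul_assoc, hChIlam]
  have hUUt : U * Uᵀ = 1 := mul_eq_one_comm.mp hUtU
  have hDfact : D = U * Ch * Vᵀ := by
    rw [hUdef]
    simp only [Matrix.mul_assoc]
    rw [mulLeftCancel _ _ hChIC, hVVt, Matrix.mul_one]
  clear_value U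
  -- the tall "sinh" matrix
  set Smat : Matrix (Fin q ⊕ Fin (p - q)) (Fin q) ℝ :=
    Matrix.of fun i j => match i with
      | Sum.inl i' => if i' = j then Real.sinh (θ j) else 0
      | Sum.inr _ => 0 with hSmatdef
  have hSmatRows : Smat = fromRows (Matrix.diagonal fun l => Real.sinh (θ l)) 0 := by
    ext i j
    cases i with
    | inl i' =>
      show (if i' = j then Real.sinh (θ j) else 0) = _
      rw [Matrix.fromRows_apply_inl, Matrix.diagonal_apply]
      by_cases h : i' = j
      · rw [if_pos h, if_pos h, h]
      · rw [if_neg h, if_neg h]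
    | inr i' =>
      show (0:ℝ) = _
      rw [Matrix.fromRows_apply_inr]
      simp
  clear_value Smat
  -- factor B
  have hEE' : (B * V)ᵀ * (B * V) = Matrix.diagonal (fun l => Real.sinh (θ l) ^ 2) := by
    rw [hEE]
    exact congrArg Matrix.diagonal (funext fun l => (hsinh_sq l).symm)
  obtain ⟨Op₀, hOp₀t, hOp₀, hBV⟩ :=
    exists_orthogonal_factor (B * V) (fun l => Real.sinh (θ l)) hEE'
  rw [← hSmatRows] at hBV
  have hBfact : B = Op₀ * Smat * Vᵀ := by
    rw [← Matrix.mul_one B, ← hVVt, ← Matrix.mul_assoc]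
    exact congrArg (· * Vᵀ) hBV
  -- factor C
  have hCC : C * Cᵀ = D * Dᵀ - 1 := by rw [sub_eq_iff_eq_add'.mp f22]; abel
  have hDDt : D * Dᵀ = U * (Ch * Ch) * Uᵀ := by
    rw [hDfact, Matrix.transpose_mul, Matrix.transpose_mul, hChT,
      Matrix.transpose_transpose]
    simp only [Matrix.mul_assoc]
    rw [mulLeftCancel _ _ hVt]
  have hCC2 : C * Cᵀ = U * Matrix.diagonal (fun l => Real.sinh (θ l) ^ 2) * Uᵀ := by
    rw [hCC, hch2, Matrix.mul_sub, Matrix.sub_mul, Matrix.mul_one, hUUt, hDDt]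
  have hFF : (Cᵀ * U)ᵀ * (Cᵀ * U) = Matrix.diagonal (fun l => Real.sinh (θ l) ^ 2) := by
    rw [Matrix.transpose_mul, Matrix.transpose_transpose]
    simp only [Matrix.mul_assoc]
    rw [mulFuse _ hCC2]
    simp only [Matrix.mul_assoc]
    rw [mulLeftCancel _ _ hUtU, hUtU, Matrix.mul_one]
  obtain ⟨W, hWt, hWWt, hCU⟩ :=
    exists_orthogonal_factor (Cᵀ * U) (fun l => Real.sinh (θ l)) hFF
  rw [← hSmatRows] at hCU
  have hCt : Cᵀ = W * Smat * Uᵀ := by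
    rw [← Matrix.mul_one Cᵀ, ← hUUt, ← Matrix.mul_assoc]
    exact congrArg (· * Uᵀ) hCU
  have hCfact : C = U * Smatᵀ * Wᵀ := by
    have h : C = (W * Smat * Uᵀ)ᵀ := by rw [← hCt, Matrix.transpose_transpose]
    rw [h, Matrix.transpose_mul, Matrix.transpose_mul, Matrix.transpose_transpose,
      Matrix.mul_assoc]
  -- block-diagonal cosh matrices on the p-indices
  set N : Matrix (Fin q ⊕ Fin (p - q)) (Fin q ⊕ Fin (p - q)) ℝ := fromBlocks Ch 0 0 1
    with hNdef
  set NI : Matrix (Fin q ⊕ Fin (p - q)) (Fin q ⊕ Fin (p - q)) ℝ := fromBlocks ChI 0 0 1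
    with hNIdef
  have hNNI : N * NI = 1 := by
    rw [hNdef, hNIdef, fromBlocks_multiply]
    simp [hChChI, ← fromBlocks_one]
  have hNIN : NI * N = 1 := by
    rw [hNIdef, hNdef, fromBlocks_multiply]
    simp [hChIC, ← fromBlocks_one]
  have hNIT : NIᵀ = NI := by
    rw [hNIdef, fromBlocks_transpose, hChIT, Matrix.transpose_zero, Matrix.transpose_zero,
      Matrix.transpose_one]
  have hNIS : NI * Smat = Smat * ChI := by
    rw [hNIdef, hSmatRows, Matrix.fromBlocks_mul_fromRows, Matrix.fromRows_mul]
    simp [hChIS]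
  have hSS : (1 : Matrix (Fin q ⊕ Fin (p - q)) (Fin q ⊕ Fin (p - q)) ℝ) + Smat * Smatᵀ
      = N * N := by
    rw [hSmatRows, Matrix.transpose_fromRows, Matrix.transpose_zero,
      Matrix.diagonal_transpose, Matrix.fromRows_mul_fromCols, hNdef,
      fromBlocks_multiply, ← fromBlocks_one, fromBlocks_add]
    simp [h1SS]
  clear_value N NI
  -- the middle orthogonal correction
  set X : Matrix (Fin q ⊕ Fin (p - q)) (Fin q ⊕ Fin (p - q)) ℝ := Op₀ᵀ * A * W with hXdef
  have hAX : Op₀ * X * Wᵀ = A := by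
    rw [hXdef]
    simp only [Matrix.mul_assoc]
    rw [mulLeftCancel _ _ hOp₀, hWWt, Matrix.mul_one]
  have hAA : Aᵀ * A = 1 + Cᵀ * C := sub_eq_iff_eq_add.mp e11
  have hCtC : Cᵀ * C = W * (Smat * Smatᵀ) * Wᵀ := by
    rw [hCt, hCfact]
    simp only [Matrix.mul_assoc]
    rw [mulLeftCancel _ _ hUtU]
  have hAA2 : Aᵀ * A = W * (1 + Smat * Smatᵀ) * Wᵀ := by
    rw [Matrix.mul_add, Matrix.add_mul, Matrix.mul_one, hWWt, hAA, hCtC]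
  have hXX : Xᵀ * X = N * N := by
    rw [hXdef, Matrix.transpose_mul, Matrix.transpose_mul, Matrix.transpose_transpose]
    simp only [Matrix.mul_assoc]
    rw [mulLeftCancel _ _ hOp₀, mulFuse _ hAA2]
    simp only [Matrix.mul_assoc]
    rw [mulLeftCancel _ _ hWt, hWt, Matrix.mul_one, hSS]
  have hXS : X * Smat = Smat * Ch := by
    have hACt : A * Cᵀ = B * Dᵀ := sub_eq_zero.mp f12
    have lhs : A * Cᵀ = Op₀ * (X * (Smat * Uᵀ)) := by
      rw [← hAX, hCt]
      simp only [Matrix.mul_assoc]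
      rw [mulLeftCancel _ _ hWt]
    have rhs : B * Dᵀ = Op₀ * (Smat * (Ch * Uᵀ)) := by
      rw [hBfact, hDfact, Matrix.transpose_mul, Matrix.transpose_mul, hChT,
        Matrix.transpose_transpose]
      simp only [Matrix.mul_assoc]
      rw [mulLeftCancel _ _ hVt]
    have heq : Op₀ * (X * (Smat * Uᵀ)) = Op₀ * (Smat * (Ch * Uᵀ)) := by
      rw [← lhs, ← rhs, hACt]
    have h2 := congrArg (fun M => Op₀ᵀ * M * U) heq
    rw [mulLeftCancel _ _ hOp₀t, mulLeftCancel _ _ hOp₀t] at h2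
    simp only [Matrix.mul_assoc] at h2
    rw [hUtU, Matrix.mul_one, Matrix.mul_one] at h2
    exact h2
  set Z : Matrix (Fin q ⊕ Fin (p - q)) (Fin q ⊕ Fin (p - q)) ℝ := X * NI with hZdef
  have hZZ : Zᵀ * Z = 1 := by
    rw [hZdef, Matrix.transpose_mul, hNIT]
    simp only [Matrix.mul_assoc]
    rw [mulFuse _ hXX]
    simp only [Matrix.mul_assoc]
    rw [mulLeftCancel _ _ hNIN, hNNI]
  have hZS : Z * Smat = Smat := by
    rw [hZdef, Matrix.mul_assoc, hNIS, ← Matrix.mul_assoc, hXS, Matrix.mul_assoc, hChChI,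
      Matrix.mul_one]
  set Opm : Matrix (Fin q ⊕ Fin (p - q)) (Fin q ⊕ Fin (p - q)) ℝ := Op₀ * Z with hOpdef
  have hOpt : Opmᵀ * Opm = 1 := by
    rw [hOpdef, Matrix.transpose_mul]
    simp only [Matrix.mul_assoc]
    rw [mulLeftCancel _ _ hOp₀t, hZZ]
  simp only [Matrix.mul_assoc] at hAX
  have hAfin : Opm * N * Wᵀ = A := by
    rw [hOpdef, hZdef]
    simp only [Matrix.mul_assoc]
    rw [mulLeftCancel _ _ hNIN, hAX]
  have hBfin : Opm * Smat * Vᵀ = B := by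
    rw [hOpdef, hBfact]
    simp only [Matrix.mul_assoc]
    rw [← Matrix.mul_assoc Z Smat Vᵀ, hZS]
  clear_value Z Opm X
  refine ⟨Opm, Wᵀ, U, Vᵀ, θ, hOpt, ?_, hUtU, ?_, ?_⟩
  · rw [Matrix.transpose_transpose]; exact hWWt
  · rw [Matrix.transpose_transpose]; exact hVVt
  · have hM21 : (Matrix.of fun i j => match j with
        | Sum.inl j' => if i = j' then Real.sinh (θ i) else 0
        | Sum.inr _ => 0 : Matrix (Fin q) (Fin q ⊕ Fin (p - q)) ℝ) = Smatᵀ := by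
      rw [hSmatRows]
      ext i j
      cases j with
      | inl j' =>
        show (if i = j' then Real.sinh (θ i) else 0) = _
        rw [Matrix.transpose_apply, Matrix.fromRows_apply_inl, Matrix.diagonal_apply]
        by_cases h : i = j'
        · rw [if_pos h, if_pos h.symm, h]
        · rw [if_neg h, if_neg (Ne.symm h)]
      | inr j' =>
        show (0:ℝ) = _
        rw [Matrix.transpose_apply, Matrix.fromRows_apply_inr]
        simp
    rw [hGb, hM21, ← hChdef, ← hSmatdef, ← hNdef, fromBlocks_multiply, fromBlocks_multiply]
    simp only [Matrix.mul_zero, Matrix.zero_mul, Matrix.mul_one, Matrix.one_mul, add_zero,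
      zero_add, Matrix.zero_mul]
    rw [hAfin, hBfin, ← hCfact, ← hDfact]
end

section
/- (F11 folding) Any 2n×2n real symmetric positive definite matrix A is congruent, by a realified complex matrix, to a block diagonal matrix diag(Σ, Σ⁻¹): there exist X, Y ∈ ℝ^{n×n} with X + iY invertible and a positive diagonal Σ such that A = Wᵀ diag(Σ, Σ⁻¹) W, where W = [[X, Y], [−Y, X]]. -/
open Matrix RealInnerProductSpace

private lemma exists_perp_eig {ι : Type*} [Fintype ι] [DecidableEq ι]
    (M : Matrix ι ι ℝ) (hM : Mᵀ = M) (W : Submodule ℝ (ι → ℝ)) (hW : W ≠ ⊤)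
    (hstab : ∀ w ∈ W, M *ᵥ w ∈ W) :
    ∃ (v : ι → ℝ) (μ : ℝ), v ≠ 0 ∧ (∀ w ∈ W, w ⬝ᵥ v = 0) ∧ M *ᵥ v = μ • v := by
  classical
  set e : EuclideanSpace ℝ ι ≃ₗ[ℝ] (ι → ℝ) := WithLp.linearEquiv 2 ℝ (ι → ℝ) with he
  set W' : Submodule ℝ (EuclideanSpace ℝ ι) := W.comap e.toLinearMap with hW'def
  have hW'top : W' ≠ ⊤ := by
    intro h
    apply hW
    rw [eq_top_iff]
    intro x _
    have hx : e.symm x ∈ W' := by rw [h]; trivial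
    simpa [hW'def] using hx
  have horth : W'ᗮ ≠ ⊥ := fun h => hW'top (Submodule.orthogonal_eq_bot_iff.mp h)
  set T := Matrix.toEuclideanLin M with hT
  have hHerm : M.IsHermitian := by
    unfold Matrix.IsHermitian
    rw [Matrix.conjTranspose_eq_transpose_of_trivial, hM]
  have hsym : T.IsSymmetric := (Matrix.isHermitian_iff_isSymmetric).mp hHerm
  have hTW' : ∀ w ∈ W', T w ∈ W' := by
    intro w hw
    simp only [hW'def, Submodule.mem_comap] at hw ⊢
    have : e.toLinearMap (T w) = M *ᵥ (e.toLinearMap w) := rfl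
    rw [this]
    exact hstab _ hw
  have hTperp : ∀ x ∈ W'ᗮ, T x ∈ W'ᗮ := by
    intro x hx
    rw [Submodule.mem_orthogonal] at hx ⊢
    intro u hu
    have h1 : (inner ℝ (T u) x : ℝ) = 0 := hx _ (hTW' u hu)
    rw [← hsym u x]
    exact h1
  haveI : Nontrivial W'ᗮ := Submodule.nontrivial_iff_ne_bot.mpr horth
  set Tr : W'ᗮ →ₗ[ℝ] W'ᗮ := T.restrict hTperp with hTrdef
  have hTrsym : Tr.IsSymmetric := by
    intro x y
    have h0 := hsym (x : EuclideanSpace ℝ ι) (y : EuclideanSpace ℝ ι)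
    simpa [hTrdef, Submodule.coe_inner, LinearMap.restrict_coe_apply] using h0
  obtain ⟨μ, hev⟩ : ∃ μ, Module.End.HasEigenvalue Tr μ :=
    ⟨_, hTrsym.hasEigenvalue_iSup_of_finiteDimensional⟩
  obtain ⟨v', hv'⟩ := hev.exists_hasEigenvector
  refine ⟨e ((v' : EuclideanSpace ℝ ι)), μ, ?_, ?_, ?_⟩
  · intro h
    apply hv'.right
    apply Subtype.ext
    exact e.injective (by rw [h]; simp)
  · intro w hw
    have hmem : e.symm w ∈ W' := by
      simpa [hW'def] using hw
    have h0 : (inner ℝ (e.symm w) ((v' : EuclideanSpace ℝ ι)) : ℝ) = 0 :=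
      (Submodule.mem_orthogonal _ _).mp v'.prop _ hmem
    rw [← h0]
    simp [PiLp.inner_apply, RCLike.inner_apply, dotProduct, he, mul_comm]
  · have h1 : T (v' : EuclideanSpace ℝ ι) = μ • (v' : EuclideanSpace ℝ ι) := by
      have := hv'.apply_eq_smul
      calc T (v' : EuclideanSpace ℝ ι) = ((Tr v' : W'ᗮ) : EuclideanSpace ℝ ι) :=
        (LinearMap.restrict_coe_apply _ _ _).symm
      _ = μ • (v' : EuclideanSpace ℝ ι) := by rw [this]; rfl
    have h2 := congrArg e h1
    rw [_root_.map_smul] at h2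
    rw [← h2]
    rfl
private lemma build_family (n : ℕ) (N : Matrix (Fin n ⊕ Fin n) (Fin n ⊕ Fin n) ℝ)
    (hN : N * N = -1) :
    ∀ k, k ≤ n →
    ∃ (g : Fin k → ((Fin n ⊕ Fin n) → ℝ)) (μ : Fin k → ℝ),
      (∀ i, 1 ≤ μ i) ∧ (∀ i, (Nᵀ * N) *ᵥ g i = μ i • g i) ∧
      (∀ i j, g i ⬝ᵥ g j = if i = j then 1 else 0) ∧
      (∀ i j, g i ⬝ᵥ (N *ᵥ g j) = 0) := by
  classical
  -- basic matrix identities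
  set M : Matrix (Fin n ⊕ Fin n) (Fin n ⊕ Fin n) ℝ := Nᵀ * N with hMdef
  have hNTNT : Nᵀ * Nᵀ = -1 := by
    rw [← Matrix.transpose_mul, hN]; simp
  have hMsymm : Mᵀ = M := by
    rw [hMdef, Matrix.transpose_mul, Matrix.transpose_transpose]
  have hMNM : M * N * M = N := by
    rw [hMdef]
    calc Nᵀ * N * N * (Nᵀ * N) = Nᵀ * (N * N) * (Nᵀ * N) := by
          rw [Matrix.mul_assoc Nᵀ N N]
    _ = (-Nᵀ) * (Nᵀ * N) := by rw [hN]; simp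
    _ = -((Nᵀ * Nᵀ) * N) := by rw [Matrix.mul_assoc]; simp
    _ = N := by rw [hNTNT]; simp
  have hNT : Nᵀ = -(M * N) := by
    rw [hMdef, Matrix.mul_assoc, hN]; simp
  -- eigen helper: M (N x) = μ⁻¹ (N x)
  have heigN : ∀ (x : (Fin n ⊕ Fin n) → ℝ) (μ : ℝ), μ ≠ 0 → M *ᵥ x = μ • x →
      M *ᵥ (N *ᵥ x) = μ⁻¹ • (N *ᵥ x) := by
    intro x μ hμ hx
    have h1 : N *ᵥ x = (M * N * M) *ᵥ x := by rw [hMNM]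
    rw [← Matrix.mulVec_mulVec, ← Matrix.mulVec_mulVec, hx, Matrix.mulVec_smul,
      Matrix.mulVec_smul] at h1
    calc M *ᵥ (N *ᵥ x) = μ⁻¹ • (μ • (M *ᵥ (N *ᵥ x))) := by
          rw [smul_smul, inv_mul_cancel₀ hμ, one_smul]
    _ = μ⁻¹ • (N *ᵥ x) := by rw [← h1]
  -- invariance helper
  have hinv : ∀ (x y : (Fin n ⊕ Fin n) → ℝ) (a b : ℝ), M *ᵥ x = a • x → M *ᵥ y = b • y →
      (a * b) * (x ⬝ᵥ (N *ᵥ y)) = x ⬝ᵥ (N *ᵥ y) := by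
    intro x y a b hx hy
    have h1 : x ⬝ᵥ (N *ᵥ y) = x ⬝ᵥ ((M * N * M) *ᵥ y) := by rw [hMNM]
    have h2 : x ⬝ᵥ ((M * N * M) *ᵥ y) = (M *ᵥ x) ⬝ᵥ ((N * M) *ᵥ y) := by
      have e1 : (M * N * M) *ᵥ y = M *ᵥ ((N * M) *ᵥ y) := by
        rw [Matrix.mulVec_mulVec, Matrix.mul_assoc]
      rw [e1, Matrix.dotProduct_mulVec, ← Matrix.mulVec_transpose, hMsymm]
    have h3 : (N * M) *ᵥ y = N *ᵥ (M *ᵥ y) := (Matrix.mulVec_mulVec _ _ _).symm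
    have key : x ⬝ᵥ (N *ᵥ y) = a * (b * (x ⬝ᵥ (N *ᵥ y))) := by
      conv_lhs => rw [h1, h2, h3]
      rw [hx, hy, Matrix.mulVec_smul, smul_dotProduct, dotProduct_smul,
        smul_eq_mul, smul_eq_mul]
    linear_combination -key
  intro k
  induction k with
  | zero =>
    intro _
    exact ⟨Fin.elim0, Fin.elim0, fun i => i.elim0, fun i => i.elim0,
      fun i => i.elim0, fun i => i.elim0⟩
  | succ k ih =>
    intro hk1
    obtain ⟨g, μ, hμ1, heig, horth, homega⟩ := ih (Nat.le_of_succ_le hk1)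
    -- the span of the current family and its N-images
    set G2 : (Fin k ⊕ Fin k) → ((Fin n ⊕ Fin n) → ℝ) :=
      Sum.elim g (fun i => N *ᵥ g i) with hG2
    set W : Submodule ℝ ((Fin n ⊕ Fin n) → ℝ) := Submodule.span ℝ (Set.range G2) with hWdef
    have hgW : ∀ i, g i ∈ W := fun i => Submodule.subset_span ⟨Sum.inl i, rfl⟩
    have hNgW : ∀ i, N *ᵥ g i ∈ W := fun i => Submodule.subset_span ⟨Sum.inr i, rfl⟩
    have hμ0 : ∀ i, (μ i : ℝ) ≠ 0 := fun i => by have := hμ1 i; linarith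
    -- stability of W under M and N
    have hMstab : ∀ w ∈ W, M *ᵥ w ∈ W := by
      intro w hw
      induction hw using Submodule.span_induction with
      | mem x hx =>
        obtain ⟨p, rfl⟩ := hx
        cases p with
        | inl i =>
          have : M *ᵥ G2 (Sum.inl i) = μ i • g i := heig i
          rw [this]; exact Submodule.smul_mem _ _ (hgW i)
        | inr i =>
          have : M *ᵥ G2 (Sum.inr i) = (μ i)⁻¹ • (N *ᵥ g i) :=
            heigN (g i) (μ i) (hμ0 i) (heig i)
          rw [this]; exact Submodule.smul_mem _ _ (hNgW i)
      | zero => rw [Matrix.mulVec_zero]; exact Submodule.zero_mem _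
      | add x y _ _ hx hy => rw [Matrix.mulVec_add]; exact Submodule.add_mem _ hx hy
      | smul c x _ hx => rw [Matrix.mulVec_smul]; exact Submodule.smul_mem _ _ hx
    have hNstab : ∀ w ∈ W, N *ᵥ w ∈ W := by
      intro w hw
      induction hw using Submodule.span_induction with
      | mem x hx =>
        obtain ⟨p, rfl⟩ := hx
        cases p with
        | inl i => exact hNgW i
        | inr i =>
          have : N *ᵥ G2 (Sum.inr i) = -(g i) := by
            show N *ᵥ (N *ᵥ g i) = -(g i)
            rw [Matrix.mulVec_mulVec, hN, Matrix.neg_mulVec, Matrix.one_mulVec]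
          rw [this]; exact Submodule.neg_mem _ (hgW i)
      | zero => rw [Matrix.mulVec_zero]; exact Submodule.zero_mem _
      | add x y _ _ hx hy => rw [Matrix.mulVec_add]; exact Submodule.add_mem _ hx hy
      | smul c x _ hx => rw [Matrix.mulVec_smul]; exact Submodule.smul_mem _ _ hx
    have hNTstab : ∀ w ∈ W, Nᵀ *ᵥ w ∈ W := by
      intro w hw
      rw [hNT]
      rw [Matrix.neg_mulVec, ← Matrix.mulVec_mulVec]
      exact Submodule.neg_mem _ (hMstab _ (hNstab _ hw))
    -- W is a proper subspace
    have hWne : W ≠ ⊤ := by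
      intro htop
      have h1 : Module.finrank ℝ W ≤ 2 * k := by
        have := finrank_range_le_card (R := ℝ) G2
        rw [Set.finrank] at this
        simpa [two_mul] using this
      have h2 : Module.finrank ℝ W = 2 * n := by
        rw [htop, finrank_top, Module.finrank_fintype_fun_eq_card]
        simp [two_mul]
      rw [h2] at h1
      omega
    obtain ⟨v₀, μ₀, hv0ne, hv0perp, hv0eig⟩ := exists_perp_eig M hMsymm W hWne hMstab
    have hdotpos : ∀ x : (Fin n ⊕ Fin n) → ℝ, x ≠ 0 → 0 < x ⬝ᵥ x := by
      intro x hx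
      have h0 : (0:ℝ) ≤ x ⬝ᵥ x := Finset.sum_nonneg fun i _ => mul_self_nonneg (x i)
      rcases h0.lt_or_eq with h | h
      · exact h
      · exact absurd (dotProduct_self_eq_zero.mp h.symm) hx
    have hNv0 : N *ᵥ v₀ ≠ 0 := by
      intro h
      apply hv0ne
      have h2 : N *ᵥ (N *ᵥ v₀) = -v₀ := by
        rw [Matrix.mulVec_mulVec, hN, Matrix.neg_mulVec, Matrix.one_mulVec]
      rw [h, Matrix.mulVec_zero] at h2
      exact neg_eq_zero.mp h2.symm
    have hid : μ₀ * (v₀ ⬝ᵥ v₀) = (N *ᵥ v₀) ⬝ᵥ (N *ᵥ v₀) := by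
      have h1 : v₀ ⬝ᵥ (M *ᵥ v₀) = (N *ᵥ v₀) ⬝ᵥ (N *ᵥ v₀) := by
        rw [hMdef, ← Matrix.mulVec_mulVec, Matrix.dotProduct_mulVec, Matrix.vecMul_transpose]
      rw [hv0eig, dotProduct_smul, smul_eq_mul] at h1
      exact h1
    have hμ0pos : 0 < μ₀ := by
      have hp := hdotpos v₀ hv0ne
      have hq := hdotpos _ hNv0
      nlinarith
    obtain ⟨v, ν, hvne, hvperp, hveig, hν1⟩ :
        ∃ (v : (Fin n ⊕ Fin n) → ℝ) (ν : ℝ), v ≠ 0 ∧ (∀ w ∈ W, w ⬝ᵥ v = 0) ∧ M *ᵥ v = ν • v ∧ 1 ≤ ν := by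
      by_cases h1 : 1 ≤ μ₀
      · exact ⟨v₀, μ₀, hv0ne, hv0perp, hv0eig, h1⟩
      · refine ⟨N *ᵥ v₀, μ₀⁻¹, hNv0, ?_, heigN v₀ μ₀ (ne_of_gt hμ0pos) hv0eig, ?_⟩
        · intro w hw
          rw [Matrix.dotProduct_mulVec, ← Matrix.mulVec_transpose]
          exact hv0perp _ (hNTstab w hw)
        · exact one_le_inv₀ hμ0pos |>.mpr (le_of_not_ge h1)
    set c : ℝ := Real.sqrt (v ⬝ᵥ v) with hcdef
    have hcpos : 0 < c := Real.sqrt_pos.mpr (hdotpos v hvne)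
    have hcc : c * c = v ⬝ᵥ v := Real.mul_self_sqrt (le_of_lt (hdotpos v hvne))
    set gnew : (Fin n ⊕ Fin n) → ℝ := c⁻¹ • v with hgnewdef
    have hgneweig : M *ᵥ gnew = ν • gnew := by
      rw [hgnewdef, Matrix.mulVec_smul, hveig, smul_comm]
    have hgnewperp : ∀ w ∈ W, w ⬝ᵥ gnew = 0 := by
      intro w hw
      rw [hgnewdef, dotProduct_smul, hvperp w hw, smul_zero]
    have hgnewnorm : gnew ⬝ᵥ gnew = 1 := by
      rw [hgnewdef, smul_dotProduct, dotProduct_smul, ← hcc]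
      simp only [smul_eq_mul]
      field_simp
    have hNgnewperp : ∀ w ∈ W, w ⬝ᵥ (N *ᵥ gnew) = 0 := by
      intro w hw
      rw [Matrix.dotProduct_mulVec, ← Matrix.mulVec_transpose]
      exact hgnewperp _ (hNTstab w hw)
    have hkey : ∀ j, g j ⬝ᵥ (N *ᵥ gnew) = 0 := by
      intro j
      by_cases hj : μ j = 1
      · have h1 : Nᵀ *ᵥ g j = -(N *ᵥ g j) := by
          rw [hNT, Matrix.neg_mulVec, ← Matrix.mulVec_mulVec]
          rw [heigN (g j) (μ j) (hμ0 j) (heig j), hj]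
          simp
        rw [Matrix.dotProduct_mulVec, ← Matrix.mulVec_transpose, h1]
        rw [neg_dotProduct, hgnewperp _ (hNgW j), neg_zero]
      · have h2 := hinv (g j) gnew (μ j) ν (heig j) hgneweig
        have hne1 : μ j * ν ≠ 1 := by
          have hj1 : 1 < μ j := lt_of_le_of_ne (hμ1 j) (Ne.symm hj)
          nlinarith
        have h3 : (μ j * ν - 1) * (g j ⬝ᵥ (N *ᵥ gnew)) = 0 := by ring_nf; linarith [h2]
        rcases mul_eq_zero.mp h3 with h | h
        · exact absurd (by linarith : μ j * ν = 1) hne1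
        · exact h
    have hkey2 : gnew ⬝ᵥ (N *ᵥ gnew) = 0 := by
      by_cases hν : ν = 1
      · have h1 : Nᵀ *ᵥ gnew = -(N *ᵥ gnew) := by
          rw [hNT, Matrix.neg_mulVec, ← Matrix.mulVec_mulVec]
          rw [heigN gnew ν (by rw [hν]; norm_num) hgneweig, hν]
          simp
        have h2 : gnew ⬝ᵥ (N *ᵥ gnew) = -(gnew ⬝ᵥ (N *ᵥ gnew)) := by
          conv_lhs => rw [Matrix.dotProduct_mulVec, ← Matrix.mulVec_transpose, h1]
          rw [neg_dotProduct, dotProduct_comm]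
        linarith
      · have h2 := hinv gnew gnew ν ν hgneweig hgneweig
        have hne1 : ν * ν ≠ 1 := by
          have hj1 : 1 < ν := lt_of_le_of_ne hν1 (Ne.symm hν)
          nlinarith
        have h3 : (ν * ν - 1) * (gnew ⬝ᵥ (N *ᵥ gnew)) = 0 := by ring_nf; linarith [h2]
        rcases mul_eq_zero.mp h3 with h | h
        · exact absurd (by linarith : ν * ν = 1) hne1
        · exact h
    refine ⟨Fin.snoc g gnew, Fin.snoc μ ν, ?_, ?_, ?_, ?_⟩
    · intro i
      induction i using Fin.lastCases with
      | last => simpa using hν1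
      | cast j => simpa using hμ1 j
    · intro i
      induction i using Fin.lastCases with
      | last => simpa using hgneweig
      | cast j => simpa using heig j
    · intro i j
      induction i using Fin.lastCases with
      | last =>
        induction j using Fin.lastCases with
        | last => simpa using hgnewnorm
        | cast j =>
          have : gnew ⬝ᵥ g j = 0 := by
            rw [dotProduct_comm]; exact hgnewperp _ (hgW j)
          simp [this, (Fin.castSucc_lt_last j).ne']
      | cast i =>
        induction j using Fin.lastCases with
        | last =>
          have : g i ⬝ᵥ gnew = 0 := hgnewperp _ (hgW i)
          simp [this, (Fin.castSucc_lt_last i).ne]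
        | cast j => simpa using horth i j
    · intro i j
      induction i using Fin.lastCases with
      | last =>
        induction j using Fin.lastCases with
        | last => simpa using hkey2
        | cast j =>
          have : gnew ⬝ᵥ (N *ᵥ g j) = 0 := by
            rw [dotProduct_comm]; exact hgnewperp _ (hNgW j)
          simpa using this
      | cast i =>
        induction j using Fin.lastCases with
        | last => simpa using hkey i
        | cast j => simpa using homega i j
/-- F11 folding: a real symmetric positive definite `2n × 2n` matrix is congruent by a
realified complex matrix `W = [[X, Y], [-Y, X]]` (with `X + iY` invertible) to
`diag(Σ, Σ⁻¹)` with `Σ` positive diagonal. -/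
theorem f11_folding (n : ℕ)
    (A : Matrix (Fin n ⊕ Fin n) (Fin n ⊕ Fin n) ℝ) (hA : A.PosDef) :
    ∃ (X Y : Matrix (Fin n) (Fin n) ℝ) (σ : Fin n → ℝ),
      IsUnit (X.map (Complex.ofReal) + Complex.I • Y.map (Complex.ofReal)).det ∧
      (∀ i, 0 < σ i) ∧
      A = (Matrix.fromBlocks X Y (-Y) X)ᵀ *
          Matrix.fromBlocks (Matrix.diagonal σ) 0 0
            (Matrix.diagonal fun i => (σ i)⁻¹) *
          Matrix.fromBlocks X Y (-Y) X := by
  classical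
  set Jm : Matrix (Fin n ⊕ Fin n) (Fin n ⊕ Fin n) ℝ := Matrix.fromBlocks 0 1 (-1) 0 with hJm
  have hJJ : Jm * Jm = -1 := by
    rw [hJm, Matrix.fromBlocks_multiply]
    ext p q
    cases p <;> cases q <;>
      simp [Matrix.one_apply]
  open scoped MatrixOrder in set T : Matrix (Fin n ⊕ Fin n) (Fin n ⊕ Fin n) ℝ := CFC.sqrt A with hTdef
  have hTTA : T * T = A := by open scoped MatrixOrder in exact CFC.sqrt_mul_sqrt_self A hA.posSemidef.nonneg
  have hAdet : A.det ≠ 0 := ne_of_gt hA.det_pos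
  have hTdetne : T.det ≠ 0 := by
    intro h
    apply hAdet
    rw [← hTTA, Matrix.det_mul, h, zero_mul]
  have hTdetu : IsUnit T.det := isUnit_iff_ne_zero.mpr hTdetne
  have hTsymm : Tᵀ = T := by
    rw [← Matrix.conjTranspose_eq_transpose_of_trivial]
    open scoped MatrixOrder in exact (CFC.sqrt_nonneg A).posSemidef.1
  have hTl : T⁻¹ * T = 1 := Matrix.nonsing_inv_mul T hTdetu
  have hTr : T * T⁻¹ = 1 := Matrix.mul_nonsing_inv T hTdetu
  have hTinvsymm : (T⁻¹)ᵀ = T⁻¹ := by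
    rw [Matrix.transpose_nonsing_inv, hTsymm]
  set N : Matrix (Fin n ⊕ Fin n) (Fin n ⊕ Fin n) ℝ := T * Jm * T⁻¹ with hNdef
  have hJT1 : T⁻¹ * N = Jm * T⁻¹ := by
    rw [hNdef, ← Matrix.mul_assoc, ← Matrix.mul_assoc, hTl, Matrix.one_mul]
  have hNN : N * N = -1 := by
    calc N * N = T * Jm * (T⁻¹ * (T * Jm * T⁻¹)) := by
          rw [hNdef, Matrix.mul_assoc]
    _ = T * Jm * (Jm * T⁻¹) := by
          rw [← Matrix.mul_assoc T⁻¹, ← Matrix.mul_assoc T⁻¹, hTl, Matrix.one_mul]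
    _ = T * (Jm * Jm) * T⁻¹ := by
          rw [← Matrix.mul_assoc, Matrix.mul_assoc T Jm Jm]
    _ = -1 := by
          rw [hJJ, Matrix.mul_neg, Matrix.mul_one, Matrix.neg_mul, hTr]
  obtain ⟨g, μ, hμ1, heig, horth, homega⟩ := build_family n N hNN n le_rfl
  have hμpos : ∀ i, 0 < μ i := fun i => lt_of_lt_of_le one_pos (hμ1 i)
  set σ : Fin n → ℝ := fun i => (Real.sqrt (μ i))⁻¹ with hσdef
  have hσpos : ∀ i, 0 < σ i := fun i => inv_pos.mpr (Real.sqrt_pos.mpr (hμpos i))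
  have hσμ : ∀ i, σ i * μ i = (σ i)⁻¹ := by
    intro i
    have hs : Real.sqrt (μ i) ≠ 0 := ne_of_gt (Real.sqrt_pos.mpr (hμpos i))
    have hμi : Real.sqrt (μ i) * Real.sqrt (μ i) = μ i :=
      Real.mul_self_sqrt (le_of_lt (hμpos i))
    show (Real.sqrt (μ i))⁻¹ * μ i = ((Real.sqrt (μ i))⁻¹)⁻¹
    rw [inv_inv, inv_mul_eq_div, div_eq_iff hs]
    exact hμi.symm
  -- the columns
  set cl : Fin n → ((Fin n ⊕ Fin n) → ℝ) :=
    fun i => Real.sqrt (σ i) • (T⁻¹ *ᵥ g i) with hcl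
  set cr : Fin n → ((Fin n ⊕ Fin n) → ℝ) :=
    fun i => -(Real.sqrt (σ i) • (T⁻¹ *ᵥ (N *ᵥ g i))) with hcr
  have hclcr : ∀ i, cr i = -(Jm *ᵥ cl i) := by
    intro i
    rw [hcl, hcr]
    simp only []
    congr 1
    rw [Matrix.mulVec_smul]
    congr 1
    rw [Matrix.mulVec_mulVec, hJT1, ← Matrix.mulVec_mulVec]
  -- the matrix G
  set X0 : Matrix (Fin n) (Fin n) ℝ := Matrix.of (fun a i => cl i (Sum.inl a)) with hX0
  set Y0 : Matrix (Fin n) (Fin n) ℝ := Matrix.of (fun a i => -(cl i (Sum.inr a))) with hY0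
  set G : Matrix (Fin n ⊕ Fin n) (Fin n ⊕ Fin n) ℝ := Matrix.fromBlocks X0 Y0 (-Y0) X0
    with hGdef
  have hJmull : ∀ (v : (Fin n ⊕ Fin n) → ℝ) (a : Fin n),
      (Jm *ᵥ v) (Sum.inl a) = v (Sum.inr a) := by
    intro v a
    rw [hJm]
    simp [Matrix.mulVec, dotProduct, Fintype.sum_sum_type, Matrix.one_apply]
  have hJmulr : ∀ (v : (Fin n ⊕ Fin n) → ℝ) (a : Fin n),
      (Jm *ᵥ v) (Sum.inr a) = -(v (Sum.inl a)) := by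
    intro v a
    rw [hJm]
    simp [Matrix.mulVec, dotProduct, Fintype.sum_sum_type, Matrix.one_apply]
  have hcol1 : ∀ i, (fun r => G r (Sum.inl i)) = cl i := by
    intro i
    funext r
    cases r with
    | inl a => simp [hGdef, hX0]
    | inr a => simp [hGdef, hY0]
  have hcol2 : ∀ i, (fun r => G r (Sum.inr i)) = cr i := by
    intro i
    funext r
    cases r with
    | inl a =>
      simp only [hGdef, Matrix.fromBlocks_apply₁₂, hY0, Matrix.of_apply]
      rw [hclcr i]
      simp [hJmull]
    | inr a =>
      simp only [hGdef, Matrix.fromBlocks_apply₂₂, hX0, Matrix.of_apply]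
      rw [hclcr i]
      simp [hJmulr]
  -- dot product identities
  have hAu : ∀ x, A *ᵥ (T⁻¹ *ᵥ x) = T *ᵥ x := by
    intro x
    rw [Matrix.mulVec_mulVec]
    rw [← hTTA, Matrix.mul_assoc, hTr, Matrix.mul_one]
  have hdotTT : ∀ x y, (T⁻¹ *ᵥ x) ⬝ᵥ (T *ᵥ y) = x ⬝ᵥ y := by
    intro x y
    rw [Matrix.dotProduct_mulVec]
    congr 1
    rw [← Matrix.mulVec_transpose, hTsymm, Matrix.mulVec_mulVec, hTr, Matrix.one_mulVec]
  have hsqσ : ∀ i, Real.sqrt (σ i) * Real.sqrt (σ i) = σ i :=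
    fun i => Real.mul_self_sqrt (le_of_lt (hσpos i))
  have d1 : ∀ i j, cl i ⬝ᵥ (A *ᵥ cl j) = if i = j then σ i else 0 := by
    intro i j
    rw [hcl]
    simp only []
    rw [Matrix.mulVec_smul, hAu, smul_dotProduct, dotProduct_smul, hdotTT,
      horth i j]
    by_cases h : i = j
    · subst h; simp [hsqσ i]
    · simp [h]
  have d2 : ∀ i j, cl i ⬝ᵥ (A *ᵥ cr j) = 0 := by
    intro i j
    rw [hcl, hcr]
    simp only []
    rw [Matrix.mulVec_neg, Matrix.mulVec_smul, hAu, dotProduct_neg,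
      smul_dotProduct, dotProduct_smul, hdotTT, homega i j]
    simp
  have d3 : ∀ i j, cr i ⬝ᵥ (A *ᵥ cl j) = 0 := by
    intro i j
    rw [hcl, hcr]
    simp only []
    rw [Matrix.mulVec_smul, hAu, neg_dotProduct, smul_dotProduct,
      dotProduct_smul, hdotTT]
    rw [dotProduct_comm, homega j i]
    simp
  have d4 : ∀ i j, cr i ⬝ᵥ (A *ᵥ cr j) = if i = j then (σ i)⁻¹ else 0 := by
    intro i j
    rw [hcr]
    simp only []
    rw [Matrix.mulVec_neg, Matrix.mulVec_smul, hAu, neg_dotProduct,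
      dotProduct_neg, neg_neg, smul_dotProduct, dotProduct_smul, hdotTT]
    have hNdot : (N *ᵥ g i) ⬝ᵥ (N *ᵥ g j) = if i = j then μ i else 0 := by
      have e1 : g i ⬝ᵥ ((Nᵀ * N) *ᵥ g j) = (N *ᵥ g i) ⬝ᵥ (N *ᵥ g j) := by
        rw [← Matrix.mulVec_mulVec, Matrix.dotProduct_mulVec, Matrix.vecMul_transpose]
      rw [← e1, heig j, dotProduct_smul, horth i j]
      by_cases h : i = j
      · subst h; simp
      · simp [h]
    rw [hNdot]
    by_cases h : i = j
    · subst h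
      simp only [if_pos rfl, smul_eq_mul]
      rw [← mul_assoc, hsqσ i]
      exact hσμ i
    · simp [h]
  -- G^T A G = D
  set D : Matrix (Fin n ⊕ Fin n) (Fin n ⊕ Fin n) ℝ :=
    Matrix.fromBlocks (Matrix.diagonal σ) 0 0 (Matrix.diagonal fun i => (σ i)⁻¹) with hDdef
  have hform : ∀ p q, (Gᵀ * (A * G)) p q = (fun r => G r p) ⬝ᵥ (A *ᵥ fun r => G r q) := by
    intro p q
    rw [Matrix.mul_apply]
    apply Finset.sum_congr rfl
    intro r _
    rw [Matrix.transpose_apply, Matrix.mul_apply]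
    rfl
  have hGAG : Gᵀ * A * G = D := by
    rw [Matrix.mul_assoc]
    ext p q
    rw [hform p q]
    cases p with
    | inl i =>
      cases q with
      | inl j =>
        rw [hcol1 i, hcol1 j, d1 i j, hDdef]
        simp [Matrix.diagonal_apply]
      | inr j =>
        rw [hcol1 i, hcol2 j, d2 i j, hDdef]
        simp
    | inr i =>
      cases q with
      | inl j =>
        rw [hcol2 i, hcol1 j, d3 i j, hDdef]
        simp
      | inr j =>
        rw [hcol2 i, hcol2 j, d4 i j, hDdef]
        simp [Matrix.diagonal_apply]
  have hDdet : D.det ≠ 0 := by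
    rw [hDdef, Matrix.det_fromBlocks_zero₂₁, Matrix.det_diagonal, Matrix.det_diagonal]
    exact mul_ne_zero (Finset.prod_ne_zero_iff.mpr fun i _ => ne_of_gt (hσpos i))
      (Finset.prod_ne_zero_iff.mpr fun i _ => inv_ne_zero (ne_of_gt (hσpos i)))
  have hGdetne : G.det ≠ 0 := by
    intro h
    apply hDdet
    rw [← hGAG, Matrix.det_mul, Matrix.det_mul, Matrix.det_transpose, h]
    ring
  have hGdetu : IsUnit G.det := isUnit_iff_ne_zero.mpr hGdetne
  set W : Matrix (Fin n ⊕ Fin n) (Fin n ⊕ Fin n) ℝ := G⁻¹ with hWdef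
  have hGW : G * W = 1 := Matrix.mul_nonsing_inv G hGdetu
  have hWG : W * G = 1 := Matrix.nonsing_inv_mul G hGdetu
  have hAeq : A = Wᵀ * D * W := by
    have e1 : Wᵀ * Gᵀ = 1 := by rw [← Matrix.transpose_mul, hGW, Matrix.transpose_one]
    have e2 : Wᵀ * (Gᵀ * A * G) * W = (Wᵀ * Gᵀ) * A * (G * W) := by
      simp only [Matrix.mul_assoc]
    rw [← hGAG, e2, e1, hGW, Matrix.one_mul, Matrix.mul_one]
  -- commutation of G (hence of W) with Jm
  have hGJ : G * Jm = Jm * G := by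
    rw [hGdef, hJm, Matrix.fromBlocks_multiply, Matrix.fromBlocks_multiply]
    simp [Matrix.mul_neg, Matrix.neg_mul]
  have hWJ : W * Jm = Jm * W := by
    calc W * Jm = W * Jm * (G * W) := by rw [hGW, Matrix.mul_one]
    _ = (W * (Jm * G)) * W := by simp only [Matrix.mul_assoc]
    _ = (W * (G * Jm)) * W := by rw [hGJ]
    _ = (W * G) * (Jm * W) := by simp only [Matrix.mul_assoc]
    _ = Jm * W := by rw [hWG, Matrix.one_mul]
  have hent : ∀ r s, (W * Jm) r s = (Jm * W) r s := fun r s => by rw [hWJ]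
  have e21 : ∀ a b, W (Sum.inr a) (Sum.inl b) = -(W (Sum.inl a) (Sum.inr b)) := by
    intro a b
    have h := hent (Sum.inl a) (Sum.inl b)
    rw [Matrix.mul_apply, Matrix.mul_apply, Fintype.sum_sum_type, Fintype.sum_sum_type] at h
    simp [hJm, Matrix.one_apply, mul_ite] at h
    linarith [h]
  have e22 : ∀ a b, W (Sum.inr a) (Sum.inr b) = W (Sum.inl a) (Sum.inl b) := by
    intro a b
    have h := hent (Sum.inl a) (Sum.inr b)
    rw [Matrix.mul_apply, Matrix.mul_apply, Fintype.sum_sum_type, Fintype.sum_sum_type] at h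
    simp [hJm, Matrix.one_apply, mul_ite] at h
    linarith [h]
  set X : Matrix (Fin n) (Fin n) ℝ := W.toBlocks₁₁ with hX
  set Y : Matrix (Fin n) (Fin n) ℝ := W.toBlocks₁₂ with hY
  have hblock : W = Matrix.fromBlocks X Y (-Y) X := by
    ext r s
    cases r with
    | inl a =>
      cases s with
      | inl b => simp [hX, Matrix.toBlocks₁₁]
      | inr b => simp [hY, Matrix.toBlocks₁₂]
    | inr a =>
      cases s with
      | inl b => simp [hY, Matrix.toBlocks₁₂, e21 a b]
      | inr b => simp [hX, Matrix.toBlocks₁₁, e22 a b]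
  -- invertibility of X + iY
  have hGb : G = Matrix.fromBlocks X0 Y0 (-Y0) X0 := hGdef
  have hmm : G * W = Matrix.fromBlocks (X0 * X - Y0 * Y) (X0 * Y + Y0 * X)
      (-(X0 * Y + Y0 * X)) (X0 * X - Y0 * Y) := by
    rw [hGb, hblock, Matrix.fromBlocks_multiply]
    have b11 : X0 * X + Y0 * -Y = X0 * X - Y0 * Y := by
      rw [Matrix.mul_neg, ← sub_eq_add_neg]
    have b21 : -Y0 * X + X0 * -Y = -(X0 * Y + Y0 * X) := by
      rw [Matrix.neg_mul, Matrix.mul_neg]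
      abel
    have b22 : -Y0 * Y + X0 * X = X0 * X - Y0 * Y := by
      rw [Matrix.neg_mul]
      abel
    rw [b11, b21, b22]
  have hGWblocks : Matrix.fromBlocks (X0 * X - Y0 * Y) (X0 * Y + Y0 * X)
      (-(X0 * Y + Y0 * X)) (X0 * X - Y0 * Y) = (1 : Matrix (Fin n ⊕ Fin n) (Fin n ⊕ Fin n) ℝ) := by
    rw [← hmm]
    exact hGW
  have h11 : X0 * X - Y0 * Y = 1 := by
    have := congrArg Matrix.toBlocks₁₁ hGWblocks
    rwa [Matrix.toBlocks_fromBlocks₁₁, ← Matrix.fromBlocks_one,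
      Matrix.toBlocks_fromBlocks₁₁] at this
  have h12 : X0 * Y + Y0 * X = 0 := by
    have := congrArg Matrix.toBlocks₁₂ hGWblocks
    rwa [Matrix.toBlocks_fromBlocks₁₂, ← Matrix.fromBlocks_one,
      Matrix.toBlocks_fromBlocks₁₂] at this
  set f : ℝ →+* ℂ := Complex.ofRealHom with hf
  have hmulc : (X0.map f + Complex.I • Y0.map f) * (X.map f + Complex.I • Y.map f) = 1 := by
    have expand : (X0.map f + Complex.I • Y0.map f) * (X.map f + Complex.I • Y.map f)
        = (X0.map f * X.map f - Y0.map f * Y.map f)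
          + Complex.I • (X0.map f * Y.map f + Y0.map f * X.map f) := by
      simp only [add_mul, mul_add, smul_mul_assoc, mul_smul_comm, smul_smul,
        Complex.I_mul_I, neg_one_smul, smul_add]
      abel
    have msub : ((X0 * X).map f - (Y0 * Y).map f) = (X0 * X - Y0 * Y).map f :=
      (Matrix.map_sub f (fun a b => map_sub f a b) _ _).symm
    have madd : ((X0 * Y).map f + (Y0 * X).map f) = (X0 * Y + Y0 * X).map f :=
      (Matrix.map_add f (fun a b => map_add f a b) _ _).symm
    rw [expand, ← Matrix.map_mul, ← Matrix.map_mul, ← Matrix.map_mul, ← Matrix.map_mul,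
      msub, madd, h11, h12]
    have m1 : (1 : Matrix (Fin n) (Fin n) ℝ).map f = 1 :=
      Matrix.map_one f (map_zero f) (map_one f)
    have m0 : (0 : Matrix (Fin n) (Fin n) ℝ).map f = 0 := Matrix.map_zero f (map_zero f)
    rw [m1, m0, smul_zero, add_zero]
  have hunit : IsUnit ((X.map Complex.ofReal + Complex.I • Y.map Complex.ofReal)).det := by
    have hdet : (X0.map f + Complex.I • Y0.map f).det
        * (X.map f + Complex.I • Y.map f).det = 1 := by
      rw [← Matrix.det_mul, hmulc, Matrix.det_one]
    have : IsUnit (X.map f + Complex.I • Y.map f).det :=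
      IsUnit.of_mul_eq_one _ (by rw [mul_comm]; exact hdet)
    exact this
  exact ⟨X, Y, σ, hunit, hσpos, by rw [hblock] at hAeq; exact hAeq⟩
end

section
/- (F12 folding, decoupling) For any n×n complex Hermitian positive definite matrix A with n = 2m, there exist a real invertible n×n matrix V and real numbers c_1,…,c_m > 0, s_1,…,s_m such that Re(A) = Vᵀ diag(c_1, c_1, …, c_m, c_m) V and Im(A) = Vᵀ K V, where K is the block diagonal matrix with 2×2 blocks [[0, s_l], [−s_l, 0]], and moreover c_l = cosh θ_l, s_l = sinh θ_l for some real θ_l. -/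
open Matrix Module
open scoped ComplexOrder InnerProductSpace

private lemma exists_tanh (μ : ℝ) (h1 : -1 < μ) (h2 : μ < 1) :
    ∃ θ : ℝ, Real.sinh θ = μ * Real.cosh θ := by
  have hr2 : (0:ℝ) < 1 - μ ^ 2 := by nlinarith
  have hr : 0 < Real.sqrt (1 - μ ^ 2) := Real.sqrt_pos.mpr hr2
  refine ⟨Real.arsinh (μ / Real.sqrt (1 - μ ^ 2)), ?_⟩
  rw [Real.sinh_arsinh, Real.cosh_arsinh]
  have hsq : Real.sqrt (1 - μ ^ 2) ^ 2 = 1 - μ ^ 2 := Real.sq_sqrt hr2.le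
  have : 1 + (μ / Real.sqrt (1 - μ ^ 2)) ^ 2 = (1 / Real.sqrt (1 - μ ^ 2)) ^ 2 := by
    field_simp
    rw [hsq]; ring
  rw [this, Real.sqrt_sq (by positivity)]
  field_simp



private lemma skew_normal_form :
    ∀ (m : ℕ) (E : Type) [NormedAddCommGroup E] [InnerProductSpace ℝ E]
      [FiniteDimensional ℝ E], Module.finrank ℝ E = 2 * m →
      ∀ f : E →ₗ[ℝ] E, (∀ x y : E, ⟪f x, y⟫_ℝ = -⟪x, f y⟫_ℝ) →
      ∃ (v : Fin m × Fin 2 → E) (μ : Fin m → ℝ), Orthonormal ℝ v ∧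
        ∀ l : Fin m, f (v (l, 0)) = -μ l • v (l, 1) ∧ f (v (l, 1)) = μ l • v (l, 0) := by
  intro m
  induction m with
  | zero =>
      intro E _ _ _ hE f hf
      exact ⟨fun p => p.1.elim0, fun l => l.elim0,
        ⟨fun i => i.1.elim0, fun i j h => i.1.elim0⟩, fun l => l.elim0⟩
  | succ m IH =>
      intro E _ _ _ hE f hf
      by_cases hf0 : f = 0
      · have hE' : Module.finrank ℝ E = (m + 1) * 2 := by omega
        let b := (stdOrthonormalBasis ℝ E).reindex
          ((finCongr hE').trans finProdFinEquiv.symm)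
        refine ⟨b, 0, b.orthonormal, fun l => ?_⟩
        simp [hf0]
      · -- the symmetric operator g = -f∘f
        set g : E →ₗ[ℝ] E := -(f ∘ₗ f) with hg_def
        have hgsymm : g.IsSymmetric := by
          intro x y
          have h1 : ⟪g x, y⟫_ℝ = ⟪f x, f y⟫_ℝ := by
            simp only [hg_def, LinearMap.neg_apply, LinearMap.comp_apply, inner_neg_left]
            rw [hf (f x) y]; ring
          have h2 : ⟪x, g y⟫_ℝ = ⟪f x, f y⟫_ℝ := by
            simp only [hg_def, LinearMap.neg_apply, LinearMap.comp_apply, inner_neg_right]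
            rw [hf x (f y)]
          rw [h1, h2]
        have key : ∀ x : E, ⟪g x, x⟫_ℝ = ⟪f x, f x⟫_ℝ := by
          intro x
          simp only [hg_def, LinearMap.neg_apply, LinearMap.comp_apply, inner_neg_left]
          rw [hf (f x) x]; ring
        -- find a nonzero eigenvalue
        obtain ⟨i, hi⟩ : ∃ i, hgsymm.eigenvalues rfl i ≠ 0 := by
          by_contra hc
          push_neg at hc
          apply hf0
          have hg0 : g = 0 := by
            apply (hgsymm.eigenvectorBasis rfl).toBasis.ext
            intro i
            have h := (hgsymm.hasEigenvector_eigenvectorBasis rfl i).apply_eq_smul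
            rw [OrthonormalBasis.coe_toBasis, h, hc i]
            simp
          ext x
          have h0 : ⟪f x, f x⟫_ℝ = 0 := by rw [← key x, hg0]; simp
          simpa using inner_self_eq_zero.mp h0
        set t := hgsymm.eigenvalues rfl i with ht_def
        set w := hgsymm.eigenvectorBasis rfl i with hw_def
        have hgw : g w = t • w :=
          (hgsymm.hasEigenvector_eigenvectorBasis rfl i).apply_eq_smul
        have hww : ⟪w, w⟫_ℝ = 1 := by
          have h1 : ‖w‖ = 1 := (hgsymm.eigenvectorBasis rfl).orthonormal.1 i
          rw [real_inner_self_eq_norm_mul_norm, h1, mul_one]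
        have hfwfw : ⟪f w, f w⟫_ℝ = t := by
          rw [← key w, hgw, real_inner_smul_left, hww, mul_one]
        have htpos : 0 < t := by
          rcases lt_or_eq_of_le (real_inner_self_nonneg (x := f w)) with h | h
          · rwa [hfwfw] at h
          · rw [← hfwfw] at hi; exact absurd h.symm hi
        set μ0 := Real.sqrt t with hμ0_def
        have hμ0 : 0 < μ0 := Real.sqrt_pos.mpr htpos
        have hμ0sq : μ0 ^ 2 = t := Real.sq_sqrt htpos.le
        set fv : E := (-μ0⁻¹) • f w with hfv_def
        have hffw : f (f w) = -(t • w) := by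
          have h : -(f (f w)) = t • w := by
            rw [← hgw]; simp [hg_def]
          linear_combination (norm := module) -h
        have hfe : f w = -μ0 • fv := by
          rw [hfv_def, smul_smul]
          have h : -μ0 * -μ0⁻¹ = 1 := by field_simp
          rw [h, one_smul]
        have hffv : f fv = μ0 • w := by
          rw [hfv_def, LinearMap.map_smul, hffw, smul_neg, smul_smul]
          have h3 : -μ0⁻¹ * t = -μ0 := by
            rw [← hμ0sq]; field_simp
          rw [h3, neg_smul, neg_neg]
        have hwfw : ⟪w, f w⟫_ℝ = 0 := by
          have h1 := hf w w
          have h2 := real_inner_comm w (f w)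
          linarith
        have hfvfv : ⟪fv, fv⟫_ℝ = 1 := by
          rw [hfv_def, real_inner_smul_left, real_inner_smul_right, hfwfw, ← hμ0sq]
          field_simp
        have hefv : ⟪w, fv⟫_ℝ = 0 := by
          rw [hfv_def, real_inner_smul_right, hwfw, mul_zero]
        -- the orthogonal complement
        set K : Submodule ℝ E := (Submodule.span ℝ {w, fv})ᗮ with hK_def
        have hKmem : ∀ x : E, x ∈ K ↔ (⟪w, x⟫_ℝ = 0 ∧ ⟪fv, x⟫_ℝ = 0) := by
          intro x
          rw [hK_def, Submodule.mem_orthogonal]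
          constructor
          · intro h
            exact ⟨h w (Submodule.subset_span (by simp)),
              h fv (Submodule.subset_span (by simp))⟩
          · rintro ⟨h1, h2⟩ u hu
            obtain ⟨a, b, rfl⟩ := Submodule.mem_span_pair.mp hu
            rw [inner_add_left, real_inner_smul_left, real_inner_smul_left, h1, h2]
            ring
        have hinv : ∀ x ∈ K, f x ∈ K := by
          intro x hx
          obtain ⟨h1, h2⟩ := (hKmem x).mp hx
          rw [hKmem]
          constructor
          · have e1 := real_inner_comm w (f x)
            have e2 := hf x w
            have e3 : ⟪x, f w⟫_ℝ = -μ0 * ⟪x, fv⟫_ℝ := by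
              rw [hfe, real_inner_smul_right]
            have e4 : ⟪x, fv⟫_ℝ = 0 := by rw [real_inner_comm]; exact h2
            rw [e4, mul_zero] at e3
            linarith
          · have e1 := real_inner_comm fv (f x)
            have e2 := hf x fv
            have e3 : ⟪x, f fv⟫_ℝ = μ0 * ⟪x, w⟫_ℝ := by
              rw [hffv, real_inner_smul_right]
            have e4 : ⟪x, w⟫_ℝ = 0 := by rw [real_inner_comm]; exact h1
            rw [e4, mul_zero] at e3
            linarith
        set f' : (↥K) →ₗ[ℝ] (↥K) := f.restrict hinv with hf'_def
        have hf'skew : ∀ x y : K, ⟪f' x, y⟫_ℝ = -⟪x, f' y⟫_ℝ := by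
          intro x y
          rw [Submodule.coe_inner, Submodule.coe_inner, hf'_def,
            LinearMap.restrict_coe_apply, LinearMap.restrict_coe_apply]
          exact hf (x : E) (y : E)
        have hfvw : ⟪fv, w⟫_ℝ = 0 := by rw [real_inner_comm]; exact hefv
        have honpair : Orthonormal ℝ (![w, fv]) := by
          have hw1 : ‖w‖ = 1 := by rw [norm_eq_sqrt_real_inner, hww, Real.sqrt_one]
          have hfv1 : ‖fv‖ = 1 := by rw [norm_eq_sqrt_real_inner, hfvfv, Real.sqrt_one]
          rw [orthonormal_iff_ite]
          intro a b
          fin_cases a <;> fin_cases b <;>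
            simp [hww, hfvfv, hefv, hfvw, hw1, hfv1]
        have hspan2 : Module.finrank ℝ (Submodule.span ℝ ({w, fv} : Set E)) = 2 := by
          have h1 : ({w, fv} : Set E) = Set.range ![w, fv] := by
            simp [Matrix.range_cons, Matrix.range_empty, Set.pair_comm]
          rw [h1, finrank_span_eq_card honpair.linearIndependent]
          simp
        have hKrank : Module.finrank ℝ (↥K) = 2 * m := by
          have h := Submodule.finrank_add_finrank_orthogonal
            (K := Submodule.span ℝ ({w, fv} : Set E))
          rw [hspan2, hE] at h
          rw [hK_def]
          omega
        obtain ⟨v', μ', hon', hrel'⟩ := IH (↥K) hKrank f' hf'skew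
        refine ⟨fun p => Fin.cases (![w, fv] p.2) (fun l => (v' (l, p.2) : E)) p.1,
          Fin.cases μ0 μ', ?_, ?_⟩
        · rw [orthonormal_iff_ite]
          rintro ⟨i1, i2⟩ ⟨j1, j2⟩
          rcases Fin.eq_zero_or_eq_succ i1 with rfl | ⟨i1', rfl⟩ <;>
            rcases Fin.eq_zero_or_eq_succ j1 with rfl | ⟨j1', rfl⟩
          · simp only [Fin.cases_zero]
            rw [(orthonormal_iff_ite.mp honpair) i2 j2]
            simp [Prod.ext_iff]
          · simp only [Fin.cases_zero, Fin.cases_succ]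
            have hm := (hKmem _).mp (v' (j1', j2)).2
            rw [if_neg (by simp [Prod.ext_iff, (Fin.succ_ne_zero j1').symm])]
            fin_cases i2
            · simpa using hm.1
            · simpa using hm.2
          · simp only [Fin.cases_zero, Fin.cases_succ]
            have hm := (hKmem _).mp (v' (i1', i2)).2
            rw [if_neg (by simp [Prod.ext_iff, Fin.succ_ne_zero i1'])]
            rw [real_inner_comm]
            fin_cases j2
            · simpa using hm.1
            · simpa using hm.2
          · simp only [Fin.cases_succ]
            rw [← Submodule.coe_inner, (orthonormal_iff_ite.mp hon') (i1', i2) (j1', j2)]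
            simp [Prod.ext_iff, Fin.succ_inj]
        · intro l
          rcases Fin.eq_zero_or_eq_succ l with rfl | ⟨l', rfl⟩
          · constructor
            · simpa using hfe
            · simpa using hffv
          · obtain ⟨ha, hb⟩ := hrel' l'
            have ha' := congrArg (Subtype.val) ha
            have hb' := congrArg (Subtype.val) hb
            rw [hf'_def, LinearMap.restrict_coe_apply] at ha' hb'
            constructor
            · simp only [Fin.cases_succ]
              simpa using ha'
            · simp only [Fin.cases_succ]
              simpa using hb'



private def Kmat (m : ℕ) (s : Fin m → ℝ) : Matrix (Fin m × Fin 2) (Fin m × Fin 2) ℝ :=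
  Matrix.of fun i j : Fin m × Fin 2 =>
    if i.1 = j.1 ∧ i.2 = 0 ∧ j.2 = 1 then s i.1
    else if i.1 = j.1 ∧ i.2 = 1 ∧ j.2 = 0 then -s i.1
    else 0

private lemma Kmat_col0 (m : ℕ) (s : Fin m → ℝ) (k : Fin m × Fin 2) (l : Fin m) :
    Kmat m s k (l, 0) = if k = (l, 1) then -s l else 0 := by
  obtain ⟨k1, k2⟩ := k
  fin_cases k2 <;> by_cases hk : k1 = l <;>
    simp [Kmat, Prod.ext_iff, hk]

private lemma Kmat_col1 (m : ℕ) (s : Fin m → ℝ) (k : Fin m × Fin 2) (l : Fin m) :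
    Kmat m s k (l, 1) = if k = (l, 0) then s l else 0 := by
  obtain ⟨k1, k2⟩ := k
  fin_cases k2 <;> by_cases hk : k1 = l <;>
    simp [Kmat, Prod.ext_iff, hk]

private lemma skew_matrix_form (m : ℕ) (J : Matrix (Fin m × Fin 2) (Fin m × Fin 2) ℝ)
    (hJ : Jᵀ = -J) :
    ∃ (Q : Matrix (Fin m × Fin 2) (Fin m × Fin 2) ℝ) (μ : Fin m → ℝ),
      Qᵀ * Q = 1 ∧ Q * Qᵀ = 1 ∧ J = Q * Kmat m μ * Qᵀ := by
  have hdim : Module.finrank ℝ (EuclideanSpace ℝ (Fin m × Fin 2)) = 2 * m := by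
    simp [finrank_euclideanSpace]; ring
  set f := Matrix.toEuclideanLin J with hf_def
  have hdot : ∀ a b : (Fin m × Fin 2) → ℝ, (J *ᵥ a) ⬝ᵥ b = -(a ⬝ᵥ (J *ᵥ b)) := by
    intro a b
    rw [Matrix.dotProduct_mulVec a J b, ← Matrix.mulVec_transpose, hJ,
      Matrix.neg_mulVec, neg_dotProduct, neg_neg]
  have hfs : ∀ x y : EuclideanSpace ℝ (Fin m × Fin 2), ⟪f x, y⟫_ℝ = -⟪x, f y⟫_ℝ := by
    intro x y
    simp only [PiLp.inner_apply, RCLike.inner_apply, conj_trivial, hf_def,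
      Matrix.toEuclideanLin_apply]
    simpa [dotProduct, mul_comm] using hdot (WithLp.ofLp x) (WithLp.ofLp y)
  obtain ⟨v, μ, hon, hrel⟩ := skew_normal_form m _ hdim f hfs
  set Q : Matrix (Fin m × Fin 2) (Fin m × Fin 2) ℝ := Matrix.of fun i j => v j i with hQ_def
  have hQ1 : Qᵀ * Q = 1 := by
    ext i j
    rw [Matrix.mul_apply, Matrix.one_apply]
    have h := orthonormal_iff_ite.mp hon i j
    simp only [PiLp.inner_apply, RCLike.inner_apply, conj_trivial] at h
    simpa [hQ_def, mul_comm] using h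
  have hQ2 : Q * Qᵀ = 1 := mul_eq_one_comm.mp hQ1
  have hL : ∀ (p : Fin m × Fin 2) (i : Fin m × Fin 2), (J * Q) i p = (f (v p)) i := by
    intro p i
    rw [Matrix.mul_apply]
    simp only [hf_def, Matrix.toEuclideanLin_apply, hQ_def,
      Matrix.of_apply, Matrix.mulVec, dotProduct]
  have hJQ : J * Q = Q * Kmat m μ := by
    ext i p
    obtain ⟨l, j2⟩ := p
    rw [hL]
    fin_cases j2
    · show f (v (l, 0)) i = (Q * Kmat m μ) i (l, 0)
      rw [(hrel l).1, Matrix.mul_apply]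
      have : ∀ k, Q i k * Kmat m μ k (l, 0) = if k = (l, (1:Fin 2)) then Q i (l,1) * (-μ l) else 0 := by
        intro k
        rw [Kmat_col0]
        split <;> rename_i h
        · subst h; ring
        · rw [mul_zero]
      rw [Finset.sum_congr rfl fun k _ => this k, Finset.sum_ite_eq']
      simp [hQ_def]
      ring
    · show f (v (l, 1)) i = (Q * Kmat m μ) i (l, 1)
      rw [(hrel l).2, Matrix.mul_apply]
      have : ∀ k, Q i k * Kmat m μ k (l, 1) = if k = (l, (0:Fin 2)) then Q i (l,0) * (μ l) else 0 := by
        intro k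
        rw [Kmat_col1]
        split <;> rename_i h
        · subst h; ring
        · rw [mul_zero]
      rw [Finset.sum_congr rfl fun k _ => this k, Finset.sum_ite_eq']
      simp [hQ_def]
      ring
  refine ⟨Q, μ, hQ1, hQ2, ?_⟩
  calc J = J * (Q * Qᵀ) := by rw [hQ2, mul_one]
    _ = (J * Q) * Qᵀ := by rw [mul_assoc]
    _ = Q * Kmat m μ * Qᵀ := by rw [hJQ]



private lemma posdef_congruence {n : Type} [Fintype n] [DecidableEq n]
    (A B : Matrix n n ℂ) (hA : A.PosDef) (hB : IsUnit B.det) : (Bᴴ * A * B).PosDef := by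
  refine Matrix.PosDef.of_dotProduct_mulVec_pos (Matrix.isHermitian_conjTranspose_mul_mul B hA.1) fun x hx => ?_
  have hBx : B *ᵥ x ≠ 0 := by
    intro h0
    apply hx
    have h := congrArg (fun v => B⁻¹ *ᵥ v) h0
    simpa [Matrix.mulVec_mulVec, Matrix.nonsing_inv_mul _ hB] using h
  have heq : star x ⬝ᵥ (Bᴴ * A * B) *ᵥ x = star (B *ᵥ x) ⬝ᵥ A *ᵥ (B *ᵥ x) := by
    rw [← Matrix.mulVec_mulVec, ← Matrix.mulVec_mulVec, Matrix.dotProduct_mulVec,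
      ← Matrix.star_mulVec]
  rw [heq]
  exact hA.dotProduct_mulVec_pos hBx

private lemma posdef_offdiag_bound {n : Type} [Fintype n] [DecidableEq n]
    (M : Matrix n n ℂ) (hM : M.PosDef) (a b : n) (hab : a ≠ b) (r : ℝ)
    (haa : M a a = 1) (hbb : M b b = 1) (hMab : M a b = Complex.I * r)
    (hMba : M b a = -(Complex.I * r)) : -1 < r ∧ r < 1 := by
  set y : ℂ → (n → ℂ) := fun ε => (Pi.single a (1:ℂ) : n → ℂ) + ε • (Pi.single b (1:ℂ) : n → ℂ) with hy_def
  have hy : ∀ ε : ℂ, star (y ε) ⬝ᵥ (M *ᵥ y ε) =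
      (M a a + ε * M a b) + star ε * (M b a + ε * M b b) := by
    intro ε
    have hsy : star (y ε) = (Pi.single a (1:ℂ) : n → ℂ) + star ε • (Pi.single b (1:ℂ) : n → ℂ) := by
      funext p
      by_cases h1 : p = a <;> by_cases h2 : p = b <;>
        simp [hy_def, h1, h2, Pi.single_apply, hab, Ne.symm hab]
    rw [hy_def]
    simp only []
    rw [hsy, Matrix.mulVec_add, Matrix.mulVec_smul, Matrix.mulVec_single, Matrix.mulVec_single]
    simp only [add_dotProduct, dotProduct_add, smul_dotProduct,
      dotProduct_smul, single_dotProduct, Pi.add_apply, Pi.smul_apply,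
      smul_eq_mul, mul_one, one_mul, MulOpposite.op_one, one_smul, Matrix.col_apply]
    ring
  have hyne : ∀ ε : ℂ, y ε ≠ 0 := by
    intro ε h0
    have h := congrFun h0 a
    simp [hy_def, Pi.single_apply, Ne.symm hab] at h
  constructor
  · have h := hM.dotProduct_mulVec_pos (hyne (-Complex.I))
    rw [hy, haa, hbb, hMab, hMba] at h
    have hval : (1 + -Complex.I * (Complex.I * r)) +
        star (-Complex.I) * (-(Complex.I * r) + -Complex.I * 1) = ((2 + 2*r : ℝ) : ℂ) := by
      simp only [star_neg, Complex.star_def, Complex.conj_I, neg_neg]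
      push_cast
      ring_nf
      rw [Complex.I_sq]
      ring
    rw [hval, Complex.zero_lt_real] at h
    linarith
  · have h := hM.dotProduct_mulVec_pos (hyne Complex.I)
    rw [hy, haa, hbb, hMab, hMba] at h
    have hval : (1 + Complex.I * (Complex.I * r)) +
        star Complex.I * (-(Complex.I * r) + Complex.I * 1) = ((2 - 2*r : ℝ) : ℂ) := by
      simp only [Complex.star_def, Complex.conj_I]
      push_cast
      ring_nf
      rw [Complex.I_sq]
      ring
    rw [hval, Complex.zero_lt_real] at h
    linarith


private lemma mu_bound (m : ℕ) (A : Matrix (Fin m × Fin 2) (Fin m × Fin 2) ℂ) (hA : A.PosDef)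
    (U : Matrix (Fin m × Fin 2) (Fin m × Fin 2) ℝ) (μ : Fin m → ℝ) (hUdet : IsUnit U.det)
    (hS : Uᵀ * U = A.map Complex.re) (hT : Uᵀ * Kmat m μ * U = A.map Complex.im) :
    ∀ l, -1 < μ l ∧ μ l < 1 := by
  set Uc := U.map Complex.ofRealHom with hUc_def
  set Kc := (Kmat m μ).map Complex.ofRealHom with hKc_def
  set Mc : Matrix (Fin m × Fin 2) (Fin m × Fin 2) ℂ := 1 + Complex.I • Kc with hMc_def
  have hUcdet : IsUnit Uc.det := by
    rw [hUc_def, ← RingHom.mapMatrix_apply, ← RingHom.map_det, isUnit_iff_ne_zero]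
    simp only [Complex.ofRealHom_eq_coe, ne_eq, Complex.ofReal_eq_zero]
    exact fun h => by rw [h] at hUdet; simp at hUdet
  have hconj : Ucᴴ = (Uᵀ).map Complex.ofRealHom := by
    ext i j
    simp [hUc_def, Matrix.conjTranspose_apply, Matrix.map_apply, Complex.conj_ofReal]
  have hAeq : A = Ucᴴ * Mc * Uc := by
    have h1 : A = (Uᵀ * U).map Complex.ofRealHom +
        Complex.I • (Uᵀ * Kmat m μ * U).map Complex.ofRealHom := by
      rw [hS, hT]
      ext i j
      simp only [Matrix.add_apply, Matrix.smul_apply, Matrix.map_apply,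
        Complex.ofRealHom_eq_coe, smul_eq_mul]
      rw [mul_comm]
      exact (Complex.re_add_im _).symm
    rw [h1, hMc_def, hconj]
    rw [Matrix.map_mul, Matrix.map_mul, Matrix.map_mul]
    rw [mul_add, mul_one, add_mul, mul_smul_comm, smul_mul_assoc]
  have hMc : Mc.PosDef := by
    have h1 : Mc = (Uc⁻¹)ᴴ * A * Uc⁻¹ := by
      rw [hAeq]
      symm
      have h2 : (Uc⁻¹)ᴴ * Ucᴴ = 1 := by
        rw [← Matrix.conjTranspose_mul, Matrix.mul_nonsing_inv _ hUcdet,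
          Matrix.conjTranspose_one]
      calc (Uc⁻¹)ᴴ * (Ucᴴ * Mc * Uc) * Uc⁻¹
          = ((Uc⁻¹)ᴴ * Ucᴴ) * Mc * (Uc * Uc⁻¹) := by noncomm_ring
        _ = Mc := by rw [h2, Matrix.mul_nonsing_inv _ hUcdet, one_mul, mul_one]
    rw [h1]
    exact posdef_congruence A (Uc⁻¹) hA (Matrix.isUnit_nonsing_inv_det Uc hUcdet)
  intro l
  have hne : ((l, (0:Fin 2))) ≠ (l, 1) := by simp
  refine posdef_offdiag_bound Mc hMc (l,0) (l,1) hne (μ l) ?_ ?_ ?_ ?_ <;>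
    simp [hMc_def, hKc_def, Matrix.add_apply, Matrix.smul_apply, Matrix.one_apply,
      Matrix.map_apply, Kmat, hne, smul_eq_mul]


private lemma diag_Kmat_diag (m : ℕ) (g : Fin m → ℝ) (s : Fin m → ℝ) :
    Matrix.diagonal (fun i : Fin m × Fin 2 => g i.1) * Kmat m s *
      Matrix.diagonal (fun i : Fin m × Fin 2 => g i.1) =
    Kmat m (fun l => g l * s l * g l) := by
  ext i j
  rw [Matrix.mul_diagonal, Matrix.diagonal_mul]
  show g i.1 * Kmat m s i j * g j.1 = Kmat m (fun l => g l * s l * g l) i j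
  unfold Kmat
  simp only [Matrix.of_apply]
  split_ifs with h1 h2
  · rw [← h1.1]
  · rw [← h2.1]; ring
  · ring






private lemma re_posDef {n : Type} [Fintype n] [DecidableEq n]
    (A : Matrix n n ℂ) (hA : A.PosDef) : (A.map Complex.re).PosDef := by
  refine Matrix.PosDef.of_dotProduct_mulVec_pos ?_ ?_
  · ext i j
    have h := congrFun (congrFun hA.1 i) j
    simp only [Matrix.conjTranspose_apply] at h
    simp only [Matrix.conjTranspose_apply, Matrix.map_apply, star_trivial]
    rw [← h]
    simp
  · intro x hx
    set xc : n → ℂ := fun i => (x i : ℂ) with hxc_def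
    have hxc : xc ≠ 0 := by
      intro h
      apply hx
      funext i
      have := congrFun h i
      simpa [hxc_def] using this
    have h := hA.dotProduct_mulVec_pos hxc
    have hre : star x ⬝ᵥ (A.map Complex.re) *ᵥ x = (star xc ⬝ᵥ A *ᵥ xc).re := by
      simp only [dotProduct, Matrix.mulVec, Complex.re_sum, Pi.star_apply,
        star_trivial, Matrix.map_apply, hxc_def, Complex.conj_ofReal,
        Complex.re_ofReal_mul, Finset.mul_sum]
      refine Finset.sum_congr rfl fun i _ => Finset.sum_congr rfl fun j _ => ?_
      simp [Complex.mul_re, dotProduct]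
    rw [Complex.lt_def] at h
    rw [hre]
    simpa using h.1
private lemma im_skew {n : Type} [Fintype n] [DecidableEq n]
    (A : Matrix n n ℂ) (hA : A.IsHermitian) : (A.map Complex.im)ᵀ = -(A.map Complex.im) := by
  ext i j
  have h := congrFun (congrFun hA i) j
  simp only [Matrix.conjTranspose_apply] at h
  simp only [Matrix.transpose_apply, Matrix.map_apply, Matrix.neg_apply]
  rw [← h]
  simp

/-- F12 folding (decoupling): for a complex Hermitian positive definite matrix `A` of
even size `n = 2m` (index set `Fin m × Fin 2`), there is a single real invertible
matrix `V` and reals `θ_l` with `Re(A) = Vᵀ diag(cosh θ_1, cosh θ_1, …) V` and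
`Im(A) = Vᵀ K V`, where `K` has `2 × 2` diagonal blocks `[[0, sinh θ_l], [-sinh θ_l, 0]]`. -/
theorem f12_folding_decoupling (m : ℕ)
    (A : Matrix (Fin m × Fin 2) (Fin m × Fin 2) ℂ) (hA : A.PosDef) :
    ∃ (V : Matrix (Fin m × Fin 2) (Fin m × Fin 2) ℝ) (θ : Fin m → ℝ),
      IsUnit V.det ∧
      A.map Complex.re =
        Vᵀ * Matrix.diagonal (fun i : Fin m × Fin 2 => Real.cosh (θ i.1)) * V ∧
      A.map Complex.im =
        Vᵀ * (Matrix.of fun i j : Fin m × Fin 2 =>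
          if i.1 = j.1 ∧ i.2 = 0 ∧ j.2 = 1 then Real.sinh (θ i.1)
          else if i.1 = j.1 ∧ i.2 = 1 ∧ j.2 = 0 then -Real.sinh (θ i.1)
          else 0) * V := by
  classical
  set S := A.map Complex.re with hS_def
  set T := A.map Complex.im with hT_def
  have hS : S.PosDef := re_posDef A hA
  have hTskew : Tᵀ = -T := im_skew A hA.1
  set W := (open scoped MatrixOrder in CFC.sqrt S) with hW_def
  have hWW : W * W = S := by
    open scoped MatrixOrder in exact CFC.sqrt_mul_sqrt_self S hS.posSemidef.nonneg
  have hWherm : W.IsHermitian := by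
    open scoped MatrixOrder in exact (CFC.sqrt_nonneg S).posSemidef.1
  have hWt : Wᵀ = W := by
    ext i j
    have h := congrFun (congrFun hWherm i) j
    simpa [Matrix.conjTranspose_apply] using h
  have hWdet : IsUnit W.det := by
    rw [isUnit_iff_ne_zero]
    intro h0
    have : S.det = W.det * W.det := by rw [← hWW, Matrix.det_mul]
    rw [h0, mul_zero] at this
    exact hS.det_pos.ne' this
  have hWWi : W * W⁻¹ = 1 := Matrix.mul_nonsing_inv W hWdet
  have hWiW : W⁻¹ * W = 1 := Matrix.nonsing_inv_mul W hWdet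
  have hWit : (W⁻¹)ᵀ = W⁻¹ := by rw [Matrix.transpose_nonsing_inv, hWt]
  set J := W⁻¹ * T * W⁻¹ with hJ_def
  have hJskew : Jᵀ = -J := by
    rw [hJ_def, Matrix.transpose_mul, Matrix.transpose_mul, hTskew, hWit]
    simp [Matrix.mul_neg, Matrix.neg_mul, mul_assoc]
  obtain ⟨Q, μ, hQ1, hQ2, hJQK⟩ := skew_matrix_form m J hJskew
  set U := Qᵀ * W with hU_def
  have hUt : Uᵀ = W * Q := by
    rw [hU_def, Matrix.transpose_mul, Matrix.transpose_transpose, hWt]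
  have hS_eq : Uᵀ * U = S := by
    rw [hUt, hU_def, mul_assoc, ← mul_assoc Q Qᵀ W, hQ2, one_mul, hWW]
  have hT_eq : Uᵀ * Kmat m μ * U = T := by
    rw [hUt, hU_def]
    have h1 : W * Q * Kmat m μ * (Qᵀ * W) = W * (Q * Kmat m μ * Qᵀ) * W := by
      noncomm_ring
    rw [h1, ← hJQK, hJ_def]
    calc W * (W⁻¹ * T * W⁻¹) * W = (W * W⁻¹) * T * (W⁻¹ * W) := by noncomm_ring
      _ = T := by rw [hWWi, hWiW, one_mul, mul_one]
  have hQdet : IsUnit Q.det := by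
    rw [isUnit_iff_ne_zero]
    intro h0
    have h1 : Qᵀ.det * Q.det = 1 := by rw [← Matrix.det_mul, hQ1, Matrix.det_one]
    rw [h0, mul_zero] at h1
    exact zero_ne_one h1
  have hUdet : IsUnit U.det := by
    rw [hU_def, Matrix.det_mul, Matrix.det_transpose]
    exact hQdet.mul hWdet
  -- bound on μ
  have hμbound : ∀ l : Fin m, -1 < μ l ∧ μ l < 1 :=
    mu_bound m A hA U μ hUdet hS_eq hT_eq
  -- choose θ
  choose θ hθ using fun l => exists_tanh (μ l) (hμbound l).1 (hμbound l).2
  have hcosh : ∀ l, 0 < Real.cosh (θ l) := fun l => Real.cosh_pos (θ l)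
  set g : Fin m → ℝ := fun l => (Real.sqrt (Real.cosh (θ l)))⁻¹ with hg_def
  have hg_ne : ∀ l, g l ≠ 0 := by
    intro l
    rw [hg_def]
    exact inv_ne_zero (Real.sqrt_pos.mpr (hcosh l)).ne'
  have hgcg : ∀ l, g l * Real.cosh (θ l) * g l = 1 := by
    intro l
    rw [hg_def, ← Real.mul_self_sqrt (hcosh l).le]
    field_simp
  have hgsg : ∀ l, g l * Real.sinh (θ l) * g l = μ l := by
    intro l
    rw [hθ l, hg_def]
    rw [← Real.mul_self_sqrt (hcosh l).le]
    field_simp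
  set d : Fin m × Fin 2 → ℝ := fun i => g i.1 with hd_def
  refine ⟨Matrix.diagonal d * U, θ, ?_, ?_, ?_⟩
  · rw [Matrix.det_mul, Matrix.det_diagonal]
    refine ((isUnit_iff_ne_zero.mpr ?_).mul hUdet)
    rw [Finset.prod_ne_zero_iff]
    exact fun i _ => hg_ne i.1
  · rw [Matrix.transpose_mul, Matrix.diagonal_transpose]
    have h2 : Matrix.diagonal d *
        Matrix.diagonal (fun i : Fin m × Fin 2 => Real.cosh (θ i.1)) * Matrix.diagonal d
        = 1 := by
      rw [Matrix.diagonal_mul_diagonal, Matrix.diagonal_mul_diagonal, ← Matrix.diagonal_one]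
      exact congrArg _ (funext fun i => by simpa [hd_def, Pi.mul_apply] using hgcg i.1)
    calc S = Uᵀ * U := hS_eq.symm
      _ = Uᵀ * (1 * U) := by rw [one_mul]
      _ = Uᵀ * ((Matrix.diagonal d *
            Matrix.diagonal (fun i : Fin m × Fin 2 => Real.cosh (θ i.1)) *
            Matrix.diagonal d) * U) := by rw [h2]
      _ = Uᵀ * Matrix.diagonal d *
            Matrix.diagonal (fun i : Fin m × Fin 2 => Real.cosh (θ i.1)) *
            (Matrix.diagonal d * U) := by noncomm_ring
  · have hKid : (Matrix.of fun i j : Fin m × Fin 2 =>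
        if i.1 = j.1 ∧ i.2 = 0 ∧ j.2 = 1 then Real.sinh (θ i.1)
        else if i.1 = j.1 ∧ i.2 = 1 ∧ j.2 = 0 then -Real.sinh (θ i.1)
        else 0) = Kmat m (fun l => Real.sinh (θ l)) := rfl
    rw [hKid, Matrix.transpose_mul, Matrix.diagonal_transpose]
    have h2 : Matrix.diagonal d * Kmat m (fun l => Real.sinh (θ l)) * Matrix.diagonal d
        = Kmat m μ := by
      rw [hd_def, diag_Kmat_diag]
      exact congrArg (Kmat m) (funext fun l => hgsg l)
    calc T = Uᵀ * Kmat m μ * U := hT_eq.symm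
      _ = Uᵀ * ((Matrix.diagonal d * Kmat m (fun l => Real.sinh (θ l)) *
            Matrix.diagonal d) * U) := by rw [h2]; noncomm_ring
      _ = Uᵀ * Matrix.diagonal d * Kmat m (fun l => Real.sinh (θ l)) *
            (Matrix.diagonal d * U) := by noncomm_ring
end
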